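/- arXiv:1309.1291 — 2 statements merged into one kernel-verified Lean document; each statement's English description precedes it below -/
import Mathlib

section
/- Let E be a Banach space, T>0, and let μ be an E-valued function on the simplex {(s,t) : 0≤s≤t≤T} which is almost-additive, i.e. there exist constants c>0 and γ>1 such that |(μ_tu + μ_us) − μ_ts| ≤ c|t−s|^γ for all 0≤s≤u≤t≤T. Then there exists a function φ : [0,T] → E and a constant c'>0 (which can be chosen to depend only on c, γ and T) such that |(φ_t − φ_s) − μ_ts| ≤ c'|t−s|^γ for all 0≤s≤t≤T; moreover φ is unique up to an additive constant: if ψ : [0,T] → E satisfies |(ψ_t − ψ_s) − μ_ts| ≤ c''|t−s|^γ for some c''>0 and all 0≤s≤t≤T, then ψ_t − ψ_s = φ_t − φ_s for all 0≤s≤t≤T. -/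
open Filter Finset

lemma sew_sum_double {E : Type*} [AddCommGroup E] (f : ℕ → E) (m : ℕ) :
    ∑ i ∈ Finset.range (2 * m), f i = ∑ i ∈ Finset.range m, (f (2 * i) + f (2 * i + 1)) := by
  induction m with
  | zero => simp
  | succ m ih =>
    rw [Nat.mul_succ, show 2 * m + 2 = (2 * m + 1) + 1 from rfl, Finset.sum_range_succ,
      Finset.sum_range_succ, Finset.sum_range_succ, ih]
    abel

noncomputable def sewCl (s t x : ℝ) : ℝ := max s (min t x)

lemma sewCl_mono (s t : ℝ) {x y : ℝ} (h : x ≤ y) : sewCl s t x ≤ sewCl s t y :=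
  max_le_max le_rfl (min_le_min le_rfl h)

lemma le_sewCl (s t x : ℝ) : s ≤ sewCl s t x := le_max_left _ _

lemma sewCl_le (s t x : ℝ) (hst : s ≤ t) : sewCl s t x ≤ t := max_le hst (min_le_left _ _)

lemma sewCl_lip (s t : ℝ) {x y : ℝ} (h : x ≤ y) : sewCl s t y - sewCl s t x ≤ y - x := by
  unfold sewCl
  rcases le_total x t with h1 | h1 <;> rcases le_total y t with h2 | h2 <;>
    rcases le_total s x with h3 | h3 <;> rcases le_total s y with h4 | h4 <;>
      simp [max_def, min_def] <;> split_ifs <;> linarith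

lemma sewCl_of_le_left (s t x : ℝ) (hx : x ≤ s) (hst : s ≤ t) : sewCl s t x = s := by
  unfold sewCl; rw [min_eq_right (by linarith), max_eq_left hx]

lemma sewCl_of_ge_right (s t x : ℝ) (hx : t ≤ x) (hst : s ≤ t) : sewCl s t x = t := by
  unfold sewCl; rw [min_eq_left hx, max_eq_right hst]

lemma sewCl_min (s u t x : ℝ) (hsu : s ≤ u) (hut : u ≤ t) :
    sewCl s u x = min u (sewCl s t x) := by
  unfold sewCl
  rcases le_total x u with h | h <;> rcases le_total x t with h2 | h2 <;>
    rcases le_total s x with h3 | h3 <;>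
      simp [max_def, min_def] <;> split_ifs <;> linarith

lemma sewCl_max (s u t x : ℝ) (hsu : s ≤ u) (hut : u ≤ t) :
    sewCl u t x = max u (sewCl s t x) := by
  unfold sewCl
  rcases le_total x t with h2 | h2 <;> rcases le_total s x with h3 | h3 <;>
      simp [max_def, min_def] <;> split_ifs <;> linarith

lemma sew_pow_aux (a b e f : ℕ) (hef : e < f) : (2*a+1) * 2^e ≠ (2*b+1) * 2^f := by
  intro h
  rw [show f = (f-e)+e by omega, pow_add, ← mul_assoc] at h
  have h3 : 2*a+1 = (2*b+1) * 2^(f-e) := Nat.eq_of_mul_eq_mul_right (pow_pos (by norm_num) e) h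
  have h4 : 2^(f-e) = 2 * 2^(f-e-1) := by rw [← pow_succ']; congr 1; omega
  have h5 : 2*a+1 = 2 * ((2*b+1) * 2^(f-e-1)) := by rw [h3, h4]; ring
  omega

lemma sew_pow_inj {a b e f : ℕ} (h : (2*a+1) * 2^e = (2*b+1) * 2^f) : e = f := by
  rcases lt_trichotomy e f with h' | h' | h'
  · exact absurd h (sew_pow_aux a b e f h')
  · exact h'
  · exact absurd h.symm (sew_pow_aux b a f e h')

noncomputable def sewB {E : Type*} [NormedAddCommGroup E] (μ : ℝ → ℝ → E) (T s t : ℝ)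
    (n : ℕ) : E :=
  ∑ i ∈ Finset.range (2 ^ n),
    μ (sewCl s t ((i : ℝ) * (T / 2 ^ n))) (sewCl s t (((i : ℝ) + 1) * (T / 2 ^ n)))

section
variable {T c γ : ℝ}

lemma sew_rpow_pow (hT : 0 < T) (β : ℝ) (n : ℕ) :
    (T / 2 ^ n) ^ β = T ^ β * (((2:ℝ) ^ β)⁻¹) ^ n := by
  rw [Real.div_rpow hT.le (by positivity)]
  have h1 : ((2:ℝ) ^ n) ^ β = ((2:ℝ) ^ β) ^ n := by
    rw [← Real.rpow_natCast 2 n, ← Real.rpow_natCast ((2:ℝ) ^ β) n,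
      ← Real.rpow_mul (by norm_num), ← Real.rpow_mul (by norm_num), mul_comm]
  rw [h1, div_eq_mul_inv, ← inv_pow]

lemma sew_telescope (hT : 0 < T) {s t : ℝ} (hs : 0 ≤ s) (hst : s ≤ t) (htT : t ≤ T) (n : ℕ) :
    ∑ i ∈ Finset.range (2 ^ n),
      (sewCl s t (((i : ℝ) + 1) * (T / 2 ^ n)) - sewCl s t ((i : ℝ) * (T / 2 ^ n))) = t - s := by
  set f : ℕ → ℝ := fun j => sewCl s t ((j : ℝ) * (T / 2 ^ n)) with hf
  have key : ∀ i : ℕ,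
      sewCl s t (((i : ℝ) + 1) * (T / 2 ^ n)) - sewCl s t ((i : ℝ) * (T / 2 ^ n))
        = f (i + 1) - f i := by
    intro i; simp only [hf]; norm_cast
  calc ∑ i ∈ Finset.range (2 ^ n),
      (sewCl s t (((i : ℝ) + 1) * (T / 2 ^ n)) - sewCl s t ((i : ℝ) * (T / 2 ^ n)))
      = ∑ i ∈ Finset.range (2 ^ n), (f (i + 1) - f i) := Finset.sum_congr rfl fun i _ => key i
    _ = f (2 ^ n) - f 0 := Finset.sum_range_sub f _
    _ = t - s := by
        simp only [hf]
        have h1 : ((2^n : ℕ) : ℝ) * (T / 2 ^ n) = T := by push_cast; field_simp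
        have h0 : (((0:ℕ)) : ℝ) * (T / 2 ^ n) = 0 := by simp
        rw [h1, h0, sewCl_of_ge_right s t T htT hst, sewCl_of_le_left s t 0 hs hst]

lemma sew_level_bound (hT : 0 < T) (hc : 0 < c) (hγ : 1 < γ)
    {s t : ℝ} (hs : 0 ≤ s) (hst : s ≤ t) (htT : t ≤ T) (n : ℕ) :
    ∑ i ∈ Finset.range (2 ^ n),
        (if s < (2 * (i : ℝ) + 1) * (T / 2 ^ (n + 1)) ∧
            (2 * (i : ℝ) + 1) * (T / 2 ^ (n + 1)) < t then
          c * (sewCl s t (((i : ℝ) + 1) * (T / 2 ^ n)) - sewCl s t ((i : ℝ) * (T / 2 ^ n))) ^ γ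
        else 0) ≤ c * (t - s) * T ^ (γ - 1) * (((2:ℝ) ^ (γ - 1))⁻¹) ^ n := by
  have hH : (0:ℝ) < T / 2 ^ n := by positivity
  set Δ : ℕ → ℝ := fun i =>
    sewCl s t (((i : ℝ) + 1) * (T / 2 ^ n)) - sewCl s t ((i : ℝ) * (T / 2 ^ n)) with hΔdef
  have hΔ0 : ∀ i, 0 ≤ Δ i := by
    intro i
    have := sewCl_mono s t (show (i:ℝ) * (T / 2^n) ≤ ((i:ℝ)+1) * (T / 2^n) by nlinarith)
    simpa [hΔdef] using sub_nonneg.2 this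
  have hΔH : ∀ i, Δ i ≤ T / 2 ^ n := by
    intro i
    have := sewCl_lip s t (show (i:ℝ) * (T / 2^n) ≤ ((i:ℝ)+1) * (T / 2^n) by nlinarith)
    calc Δ i ≤ ((i:ℝ)+1) * (T / 2^n) - (i:ℝ) * (T / 2^n) := this
    _ = T / 2^n := by ring
  have hΔγH : ∀ i, (Δ i) ^ γ ≤ (T / 2 ^ n) ^ (γ - 1) * Δ i := by
    intro i
    rcases eq_or_lt_of_le (hΔ0 i) with h | h
    · rw [← h, Real.zero_rpow (by linarith)]; positivity
    · calc (Δ i) ^ γ = (Δ i) ^ (γ - 1) * (Δ i) ^ (1:ℝ) := by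
            rw [← Real.rpow_add h]; ring_nf
      _ ≤ (T / 2 ^ n) ^ (γ - 1) * Δ i := by
            rw [Real.rpow_one]
            exact mul_le_mul_of_nonneg_right
              (Real.rpow_le_rpow (hΔ0 i) (hΔH i) (by linarith)) (hΔ0 i)
  calc ∑ i ∈ Finset.range (2 ^ n),
      (if s < (2 * (i : ℝ) + 1) * (T / 2 ^ (n + 1)) ∧
          (2 * (i : ℝ) + 1) * (T / 2 ^ (n + 1)) < t then c * (Δ i) ^ γ else 0)
      ≤ ∑ i ∈ Finset.range (2 ^ n), c * ((T / 2 ^ n) ^ (γ - 1) * Δ i) := by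
        refine Finset.sum_le_sum fun i _ => ?_
        split_ifs with h
        · exact mul_le_mul_of_nonneg_left (hΔγH i) hc.le
        · exact mul_nonneg hc.le (mul_nonneg (Real.rpow_nonneg hH.le _) (hΔ0 i))
    _ = c * (T / 2 ^ n) ^ (γ - 1) * ∑ i ∈ Finset.range (2 ^ n), Δ i := by
        rw [Finset.mul_sum]; exact Finset.sum_congr rfl fun i _ => by ring
    _ = c * (t - s) * T ^ (γ - 1) * (((2:ℝ) ^ (γ - 1))⁻¹) ^ n := by
        rw [sew_telescope hT hs hst htT n, sew_rpow_pow hT (γ - 1) n]; ring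

set_option maxHeartbeats 2000000 in
lemma sew_sumD (hT : 0 < T) (hc : 0 < c) (hγ : 1 < γ)
    {s t : ℝ} (hs : 0 ≤ s) (hst : s < t) (htT : t ≤ T) (N : ℕ) :
    ∑ n ∈ Finset.range N, (∑ i ∈ Finset.range (2 ^ n),
        (if s < (2 * (i : ℝ) + 1) * (T / 2 ^ (n + 1)) ∧
            (2 * (i : ℝ) + 1) * (T / 2 ^ (n + 1)) < t then
          c * (sewCl s t (((i : ℝ) + 1) * (T / 2 ^ n)) - sewCl s t ((i : ℝ) * (T / 2 ^ n))) ^ γ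
        else 0)) ≤
      c * (2 + (1 - ((2:ℝ) ^ (γ - 1))⁻¹)⁻¹) * (t - s) ^ γ := by
  classical
  set ρ : ℝ := ((2:ℝ) ^ (γ - 1))⁻¹ with hρdef
  have h2γ : (1:ℝ) < (2:ℝ) ^ (γ - 1) := by
    rw [show (1:ℝ) < (2:ℝ) ^ (γ-1) ↔ _ from Real.one_lt_rpow_iff_of_pos (by norm_num)]
    exact Or.inl ⟨by norm_num, by linarith⟩
  have hρ0 : 0 < ρ := by positivity
  have hρ1 : ρ < 1 := by
    rw [hρdef, inv_lt_one_iff₀]; right; exact h2γ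
  have hts : (0:ℝ) < t - s := by linarith
  -- the scale at level n
  have hH : ∀ n : ℕ, (0:ℝ) < T / 2 ^ n := fun n => by positivity
  have hHpow : ∀ n : ℕ, (T / 2 ^ n) ^ (γ - 1) = T ^ (γ - 1) * ρ ^ n := by
    intro n
    rw [Real.div_rpow hT.le (by positivity)]
    have h1 : ((2:ℝ) ^ n) ^ (γ - 1) = ((2:ℝ) ^ (γ - 1)) ^ n := by
      rw [← Real.rpow_natCast 2 n, ← Real.rpow_natCast ((2:ℝ) ^ (γ-1)) n,
        ← Real.rpow_mul (by norm_num), ← Real.rpow_mul (by norm_num), mul_comm]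
    rw [h1, div_eq_mul_inv, ← inv_pow]
  -- existence of the threshold level
  have hex : ∃ n : ℕ, T / 2 ^ n ≤ t - s := by
    obtain ⟨n, hn⟩ := pow_unbounded_of_one_lt (T / (t - s)) (by norm_num : (1:ℝ) < 2)
    refine ⟨n, ?_⟩
    rw [div_le_iff₀ (by positivity)]
    rw [div_lt_iff₀ hts] at hn
    nlinarith
  obtain ⟨M, hM, hMlt⟩ : ∃ M : ℕ, (T / 2 ^ M ≤ t - s) ∧ ∀ m, m < M → t - s < T / 2 ^ m :=
    ⟨Nat.find hex, Nat.find_spec hex, fun m hm => lt_of_not_ge (Nat.find_min hex hm)⟩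
  -- increments
  set Δ : ℕ → ℕ → ℝ := fun n i =>
    sewCl s t (((i : ℝ) + 1) * (T / 2 ^ n)) - sewCl s t ((i : ℝ) * (T / 2 ^ n)) with hΔdef
  have hΔ0 : ∀ n i, 0 ≤ Δ n i := by
    intro n i
    have := sewCl_mono s t (show (i:ℝ) * (T / 2^n) ≤ ((i:ℝ)+1) * (T / 2^n) by nlinarith [hH n])
    simpa [hΔdef] using sub_nonneg.2 this
  have hΔH : ∀ n i, Δ n i ≤ T / 2 ^ n := by
    intro n i
    have := sewCl_lip s t (show (i:ℝ) * (T / 2^n) ≤ ((i:ℝ)+1) * (T / 2^n) by nlinarith [hH n])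
    calc Δ n i ≤ ((i:ℝ)+1) * (T / 2^n) - (i:ℝ) * (T / 2^n) := this
    _ = T / 2^n := by ring
  have hΔts : ∀ n i, Δ n i ≤ t - s := by
    intro n i
    have h1 := le_sewCl s t ((i:ℝ) * (T / 2^n))
    have h2 := sewCl_le s t (((i:ℝ)+1) * (T / 2^n)) hst.le
    simp only [hΔdef]
    linarith
  have hΔγH : ∀ n i, (Δ n i) ^ γ ≤ (T / 2 ^ n) ^ (γ - 1) * Δ n i := by
    intro n i
    rcases eq_or_lt_of_le (hΔ0 n i) with h | h
    · rw [← h, Real.zero_rpow (by linarith)]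
      positivity
    · calc (Δ n i) ^ γ = (Δ n i) ^ (γ - 1) * (Δ n i) ^ (1:ℝ) := by
            rw [← Real.rpow_add h]; ring_nf
      _ ≤ (T / 2 ^ n) ^ (γ - 1) * Δ n i := by
            rw [Real.rpow_one]
            exact mul_le_mul_of_nonneg_right
              (Real.rpow_le_rpow (hΔ0 n i) (hΔH n i) (by linarith)) (hΔ0 n i)
  have hΔγts : ∀ n i, c * (Δ n i) ^ γ ≤ c * (t - s) ^ γ := by
    intro n i
    exact mul_le_mul_of_nonneg_left (Real.rpow_le_rpow (hΔ0 n i) (hΔts n i) (by linarith)) hc.le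
  have hΔsum : ∀ n : ℕ, ∑ i ∈ Finset.range (2 ^ n), Δ n i = t - s := by
    intro n
    set f : ℕ → ℝ := fun j => sewCl s t ((j : ℝ) * (T / 2 ^ n)) with hf
    have key : ∀ i : ℕ, Δ n i = f (i + 1) - f i := by
      intro i; simp only [hΔdef, hf]; norm_cast
    calc ∑ i ∈ Finset.range (2 ^ n), Δ n i
        = ∑ i ∈ Finset.range (2 ^ n), (f (i + 1) - f i) :=
          Finset.sum_congr rfl fun i _ => key i
      _ = f (2 ^ n) - f 0 := Finset.sum_range_sub f _
      _ = t - s := by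
          simp only [hf]
          have h1 : ((2^n : ℕ) : ℝ) * (T / 2 ^ n) = T := by
            push_cast
            field_simp
          have h0 : (((0:ℕ)) : ℝ) * (T / 2 ^ n) = 0 := by simp
          rw [h1, h0, sewCl_of_ge_right s t T htT hst.le, sewCl_of_le_left s t 0 hs hst.le]
  -- the filtered index set
  set J : ℕ → Finset ℕ := fun n => (Finset.range (2 ^ n)).filter
    (fun i => s < (2 * (i : ℝ) + 1) * (T / 2 ^ (n + 1)) ∧
      (2 * (i : ℝ) + 1) * (T / 2 ^ (n + 1)) < t) with hJdef
  set D : ℕ → ℝ := fun n => ∑ i ∈ J n, c * (Δ n i) ^ γ with hDdef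
  have hDeq : ∀ n, (∑ i ∈ Finset.range (2 ^ n),
      (if s < (2 * (i : ℝ) + 1) * (T / 2 ^ (n + 1)) ∧
          (2 * (i : ℝ) + 1) * (T / 2 ^ (n + 1)) < t then
        c * (sewCl s t (((i : ℝ) + 1) * (T / 2 ^ n)) - sewCl s t ((i : ℝ) * (T / 2 ^ n))) ^ γ
      else 0)) = D n := fun n => (Finset.sum_filter _ _).symm
  have hD0 : ∀ n, 0 ≤ D n := by
    intro n
    refine Finset.sum_nonneg fun i _ => ?_
    have := hΔ0 n i
    positivity
  -- fine bound
  have hDfine : ∀ n, D n ≤ c * (t - s) * T ^ (γ - 1) * ρ ^ n := by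
    intro n
    calc D n ≤ ∑ i ∈ Finset.range (2 ^ n), c * (Δ n i) ^ γ :=
          Finset.sum_le_sum_of_subset_of_nonneg (Finset.filter_subset _ _)
            (fun i _ _ => mul_nonneg hc.le (Real.rpow_nonneg (hΔ0 n i) γ))
      _ ≤ ∑ i ∈ Finset.range (2 ^ n), c * ((T / 2 ^ n) ^ (γ - 1) * Δ n i) :=
          Finset.sum_le_sum fun i _ => mul_le_mul_of_nonneg_left (hΔγH n i) hc.le
      _ = c * (T / 2 ^ n) ^ (γ - 1) * ∑ i ∈ Finset.range (2 ^ n), Δ n i := by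
          rw [Finset.mul_sum]
          refine Finset.sum_congr rfl fun i _ => by ring
      _ = c * (t - s) * T ^ (γ - 1) * ρ ^ n := by
          rw [hΔsum n, hHpow n]; ring
  -- coarse card bound
  have hJcard : ∀ n, n < M → (J n).card ≤ 1 := by
    intro n hn
    rw [Finset.card_le_one]
    intro a ha b hb
    simp only [hJdef, Finset.mem_filter] at ha hb
    by_contra hab
    have h2 : T / 2 ^ n = 2 * (T / 2 ^ (n+1)) := by
      rw [pow_succ]; ring
    have hlt := hMlt n hn
    rcases lt_or_gt_of_ne hab with h' | h'
    · have : ((a:ℝ)) + 1 ≤ (b:ℝ) := by exact_mod_cast h'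
      nlinarith [ha.2.1, hb.2.2, hH (n+1)]
    · have : ((b:ℝ)) + 1 ≤ (a:ℝ) := by exact_mod_cast h'
      nlinarith [hb.2.1, ha.2.2, hH (n+1)]
  -- coarse level count
  set CN : Finset ℕ := (Finset.range N).filter (fun n => n < M ∧ (J n).Nonempty) with hCNdef
  have hCNcard : CN.card ≤ 2 := by
    set F : ℕ → ℕ := fun n => if h : (J n).Nonempty then (2 * h.choose + 1) * 2 ^ (M - n - 1) else 0
      with hFdef
    set a0 := Nat.floor (s / (T / 2 ^ M)) with ha0
    have hkey : ∀ n ∈ CN, s < (F n : ℝ) * (T / 2 ^ M) ∧ (F n : ℝ) * (T / 2 ^ M) < t := by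
      intro n hn
      simp only [hCNdef, Finset.mem_filter] at hn
      obtain ⟨hnN, hnM, hne⟩ := hn
      have hi := hne.choose_spec
      simp only [hJdef, Finset.mem_filter] at hi
      have hFn : F n = (2 * hne.choose + 1) * 2 ^ (M - n - 1) := by
        simp only [hFdef]; rw [dif_pos hne]
      have hcast : (F n : ℝ) * (T / 2 ^ M) =
          (2 * (hne.choose : ℝ) + 1) * (T / 2 ^ (n + 1)) := by
        rw [hFn]
        have hMn : (2:ℝ) ^ M = 2 ^ (M - n - 1) * 2 ^ (n + 1) := by
          rw [← pow_add]; congr 1; omega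
        push_cast
        rw [hMn]
        field_simp
      rw [hcast]
      exact ⟨hi.2.1, hi.2.2⟩
    have hmem : ∀ n ∈ CN, F n ∈ Finset.Icc (a0 + 1) (a0 + 2) := by
      intro n hn
      obtain ⟨h1, h2⟩ := hkey n hn
      simp only [hCNdef, Finset.mem_filter] at hn
      have hM1 : 1 ≤ M := by omega
      have hts2 : t - s < 2 * (T / 2 ^ M) := by
        have hlt := hMlt (M - 1) (by omega)
        have hp : (2:ℝ) ^ M = 2 * 2 ^ (M - 1) := by
          rw [← pow_succ']; congr 1; omega
        have h3 : 2 * (T / 2 ^ M) = T / 2 ^ (M - 1) := by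
          rw [hp]; field_simp
        rw [h3]; exact hlt
      have hHM := hH M
      have hlow : a0 < F n := by
        rw [ha0, Nat.floor_lt (by positivity)]
        rw [div_lt_iff₀ hHM]
        linarith
      have hhigh : (F n : ℝ) < (a0 : ℝ) + 3 := by
        have hfl : s / (T / 2 ^ M) < (a0 : ℝ) + 1 := Nat.lt_floor_add_one _
        have : (F n : ℝ) * (T / 2 ^ M) < s + 2 * (T / 2 ^ M) := by linarith
        have hs' : s < ((a0:ℝ) + 1) * (T / 2 ^ M) := by
          rw [div_lt_iff₀ hHM] at hfl; linarith
        have := lt_of_lt_of_le this (by nlinarith : s + 2 * (T / 2 ^ M) ≤ ((a0:ℝ) + 3) * (T / 2 ^ M))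
        exact lt_of_mul_lt_mul_right (by linarith [this]) hHM.le
      have hhighn : F n ≤ a0 + 2 := by
        have : F n < a0 + 3 := by exact_mod_cast hhigh
        omega
      exact Finset.mem_Icc.mpr ⟨hlow, hhighn⟩
    have hinj : Set.InjOn F ↑CN := by
      intro n hn n' hn' hFnn
      rw [Finset.mem_coe, hCNdef, Finset.mem_filter] at hn hn'
      have hne : (J n).Nonempty := hn.2.2
      have hne' : (J n').Nonempty := hn'.2.2
      have hFn : F n = (2 * hne.choose + 1) * 2 ^ (M - n - 1) := by
        simp only [hFdef]; rw [dif_pos hne]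
      have hFn' : F n' = (2 * hne'.choose + 1) * 2 ^ (M - n' - 1) := by
        simp only [hFdef]; rw [dif_pos hne']
      rw [hFn, hFn'] at hFnn
      have := sew_pow_inj hFnn
      omega
    calc CN.card ≤ (Finset.Icc (a0 + 1) (a0 + 2)).card := Finset.card_le_card_of_injOn F hmem hinj
      _ = 2 := by rw [Nat.card_Icc]; omega
  -- put it together
  have hsplit := Finset.sum_filter_add_sum_filter_not (Finset.range N) (fun n => n < M) D
  have hcoarse : ∑ n ∈ (Finset.range N).filter (fun n => n < M), D n ≤ 2 * (c * (t - s) ^ γ) := by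
    have hsub : CN ⊆ (Finset.range N).filter (fun n => n < M) := by
      intro n hn
      simp only [hCNdef, Finset.mem_filter] at hn ⊢
      exact ⟨hn.1, hn.2.1⟩
    have heq : ∑ n ∈ CN, D n = ∑ n ∈ (Finset.range N).filter (fun n => n < M), D n := by
      refine Finset.sum_subset hsub fun n hn hnc => ?_
      simp only [Finset.mem_filter, hCNdef] at hn hnc
      have : ¬ (J n).Nonempty := fun h => hnc ⟨hn.1, hn.2, h⟩
      rw [Finset.not_nonempty_iff_eq_empty] at this
      rw [hDdef]
      simp [this]
    rw [← heq]
    calc ∑ n ∈ CN, D n ≤ ∑ n ∈ CN, c * (t - s) ^ γ := by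
          refine Finset.sum_le_sum fun n hn => ?_
          simp only [hCNdef, Finset.mem_filter] at hn
          calc D n ≤ (J n).card • (c * (t - s) ^ γ) :=
                Finset.sum_le_card_nsmul _ _ _ (fun i _ => hΔγts n i)
            _ ≤ 1 * (c * (t - s) ^ γ) := by
                rw [nsmul_eq_mul]
                refine mul_le_mul_of_nonneg_right ?_ (by positivity)
                exact_mod_cast hJcard n hn.2.1
            _ = c * (t - s) ^ γ := one_mul _
      _ = CN.card * (c * (t - s) ^ γ) := by rw [Finset.sum_const, nsmul_eq_mul]
      _ ≤ 2 * (c * (t - s) ^ γ) := by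
          refine mul_le_mul_of_nonneg_right ?_ (by positivity)
          exact_mod_cast hCNcard
  have hfine : ∑ n ∈ (Finset.range N).filter (fun n => ¬ n < M), D n ≤
      (1 - ρ)⁻¹ * (c * (t - s) ^ γ) := by
    have hsub : (Finset.range N).filter (fun n => ¬ n < M) ⊆ Finset.Ico M N := by
      intro n hn
      simp only [Finset.mem_filter, Finset.mem_range, not_lt] at hn
      exact Finset.mem_Ico.mpr ⟨hn.2, hn.1⟩
    calc ∑ n ∈ (Finset.range N).filter (fun n => ¬ n < M), D n
        ≤ ∑ n ∈ Finset.Ico M N, D n :=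
          Finset.sum_le_sum_of_subset_of_nonneg hsub (fun n _ _ => hD0 n)
      _ ≤ ∑ n ∈ Finset.Ico M N, c * (t - s) * T ^ (γ - 1) * ρ ^ n :=
          Finset.sum_le_sum fun n _ => hDfine n
      _ = c * (t - s) * T ^ (γ - 1) * ρ ^ M * ∑ k ∈ Finset.range (N - M), ρ ^ k := by
          rw [Finset.sum_Ico_eq_sum_range, Finset.mul_sum]
          refine Finset.sum_congr rfl fun k _ => ?_
          rw [pow_add]; ring
      _ ≤ c * (t - s) * T ^ (γ - 1) * ρ ^ M * (1 - ρ)⁻¹ := by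
          have hX : (0:ℝ) ≤ c * (t - s) * T ^ (γ - 1) * ρ ^ M :=
            mul_nonneg (mul_nonneg (mul_nonneg hc.le hts.le) (Real.rpow_nonneg hT.le _))
              (pow_nonneg hρ0.le M)
          refine mul_le_mul_of_nonneg_left ?_ hX
          rw [geom_sum_eq (ne_of_lt hρ1)]
          rw [show (ρ ^ (N - M) - 1) / (ρ - 1) = (1 - ρ ^ (N - M)) / (1 - ρ) by
            rw [div_eq_div_iff (by linarith) (by linarith)]; ring]
          rw [inv_eq_one_div]
          refine div_le_div₀ zero_le_one ?_ (by linarith) le_rfl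
          nlinarith [pow_nonneg hρ0.le (N - M)]
      _ = c * (t - s) * ((T / 2 ^ M) ^ (γ - 1)) * (1 - ρ)⁻¹ := by rw [hHpow M]; ring
      _ ≤ c * (t - s) * ((t - s) ^ (γ - 1)) * (1 - ρ)⁻¹ := by
          have h := Real.rpow_le_rpow (hH M).le hM (by linarith : (0:ℝ) ≤ γ - 1)
          refine mul_le_mul_of_nonneg_right
            (mul_le_mul_of_nonneg_left h (mul_nonneg hc.le hts.le))
            (inv_nonneg.mpr (by linarith))
      _ = (1 - ρ)⁻¹ * (c * (t - s) ^ γ) := by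
          have hpow : (t - s) ^ γ = (t - s) * (t - s) ^ (γ - 1) := by
            rw [show γ = 1 + (γ - 1) by ring, Real.rpow_add hts, Real.rpow_one]
            ring_nf
          rw [hpow]; ring
  calc ∑ n ∈ Finset.range N, (∑ i ∈ Finset.range (2 ^ n),
      (if s < (2 * (i : ℝ) + 1) * (T / 2 ^ (n + 1)) ∧
          (2 * (i : ℝ) + 1) * (T / 2 ^ (n + 1)) < t then
        c * (sewCl s t (((i : ℝ) + 1) * (T / 2 ^ n)) - sewCl s t ((i : ℝ) * (T / 2 ^ n))) ^ γ
      else 0)) = ∑ n ∈ Finset.range N, D n := Finset.sum_congr rfl fun n _ => hDeq n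
    _ = (∑ n ∈ (Finset.range N).filter (fun n => n < M), D n) +
        ∑ n ∈ (Finset.range N).filter (fun n => ¬ n < M), D n := hsplit.symm
    _ ≤ 2 * (c * (t - s) ^ γ) + (1 - ρ)⁻¹ * (c * (t - s) ^ γ) := add_le_add hcoarse hfine
    _ = c * (2 + (1 - ρ)⁻¹) * (t - s) ^ γ := by ring


end

section
variable {E : Type*} [NormedAddCommGroup E] [NormedSpace ℝ E]
variable {T c γ : ℝ} {μ : ℝ → ℝ → E}

set_option linter.unusedSectionVars false

lemma sew_step (hT : 0 < T) (hγ : 1 < γ)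
    (hμ : ∀ s u t : ℝ, 0 ≤ s → s ≤ u → u ≤ t → t ≤ T →
      ‖(μ u t + μ s u) - μ s t‖ ≤ c * (t - s) ^ γ)
    (hμ0 : ∀ x : ℝ, 0 ≤ x → x ≤ T → μ x x = 0)
    {s t : ℝ} (hs : 0 ≤ s) (hst : s ≤ t) (htT : t ≤ T) (n : ℕ) :
    ‖sewB μ T s t (n + 1) - sewB μ T s t n‖ ≤
      ∑ i ∈ Finset.range (2 ^ n),
        (if s < (2 * (i : ℝ) + 1) * (T / 2 ^ (n + 1)) ∧
            (2 * (i : ℝ) + 1) * (T / 2 ^ (n + 1)) < t then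
          c * (sewCl s t (((i : ℝ) + 1) * (T / 2 ^ n)) - sewCl s t ((i : ℝ) * (T / 2 ^ n))) ^ γ
        else 0) := by
  have hh' : (0:ℝ) ≤ T / 2 ^ (n + 1) := by positivity
  have hB : sewB μ T s t (n + 1) = ∑ i ∈ Finset.range (2 ^ n),
      (μ (sewCl s t (((2 * i : ℕ) : ℝ) * (T / 2 ^ (n + 1))))
         (sewCl s t ((((2 * i : ℕ) : ℝ) + 1) * (T / 2 ^ (n + 1)))) +
       μ (sewCl s t (((2 * i + 1 : ℕ) : ℝ) * (T / 2 ^ (n + 1))))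
         (sewCl s t ((((2 * i + 1 : ℕ) : ℝ) + 1) * (T / 2 ^ (n + 1))))) := by
    rw [sewB, show (2:ℕ) ^ (n+1) = 2 * 2 ^ n by ring, sew_sum_double]
  rw [hB, sewB, ← Finset.sum_sub_distrib]
  refine (norm_sum_le _ _).trans (Finset.sum_le_sum ?_)
  intro i hi
  have e1 : ((2 * i : ℕ) : ℝ) * (T / 2 ^ (n + 1)) = (i : ℝ) * (T / 2 ^ n) := by
    push_cast
    rw [pow_succ]
    ring
  have e2 : (((2 * i : ℕ) : ℝ) + 1) * (T / 2 ^ (n + 1)) = (2 * (i:ℝ) + 1) * (T / 2 ^ (n + 1)) := by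
    push_cast; ring
  have e3 : ((2 * i + 1 : ℕ) : ℝ) * (T / 2 ^ (n + 1)) = (2 * (i:ℝ) + 1) * (T / 2 ^ (n + 1)) := by
    push_cast; ring
  have e4 : (((2 * i + 1 : ℕ) : ℝ) + 1) * (T / 2 ^ (n + 1)) = ((i : ℝ) + 1) * (T / 2 ^ n) := by
    push_cast
    rw [pow_succ]
    ring
  rw [e1, e2, e3, e4]
  set m := (2 * (i:ℝ) + 1) * (T / 2 ^ (n + 1)) with hm
  have him : (i : ℝ) * (T / 2 ^ n) ≤ m := by
    rw [hm, show (i : ℝ) * (T / 2 ^ n) = (2 * (i:ℝ)) * (T / 2 ^ (n+1)) by rw [pow_succ]; ring]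
    nlinarith
  have hmi : m ≤ ((i : ℝ) + 1) * (T / 2 ^ n) := by
    rw [hm, show ((i : ℝ) + 1) * (T / 2 ^ n) = (2 * (i:ℝ) + 2) * (T / 2 ^ (n+1)) by
      rw [pow_succ]; ring]
    nlinarith
  split_ifs with hcond
  · have h := hμ _ _ _ (le_trans hs (le_sewCl s t _)) (sewCl_mono s t him) (sewCl_mono s t hmi)
      (le_trans (sewCl_le s t _ hst) htT)
    rwa [add_comm] at h
  · push_neg at hcond
    rcases le_or_gt m s with hms | hsm
    · have h1 : sewCl s t m = s := sewCl_of_le_left s t m hms hst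
      have h2 : sewCl s t ((i : ℝ) * (T / 2 ^ n)) = s :=
        sewCl_of_le_left s t _ (le_trans him hms) hst
      rw [h1, h2, hμ0 s hs (le_trans hst htT)]
      simp
    · have htm : t ≤ m := hcond hsm
      have h1 : sewCl s t m = t := sewCl_of_ge_right s t m htm hst
      have h2 : sewCl s t (((i : ℝ) + 1) * (T / 2 ^ n)) = t :=
        sewCl_of_ge_right s t _ (le_trans htm hmi) hst
      rw [h1, h2, hμ0 t (le_trans hs hst) htT]
      simp

end

section
variable {E : Type*} [NormedAddCommGroup E] [NormedSpace ℝ E] [CompleteSpace E]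
variable {T c γ : ℝ}

set_option maxHeartbeats 2000000 in
lemma sew_lambda (hT : 0 < T) (hc : 0 < c) (hγ : 1 < γ) (μ : ℝ → ℝ → E)
    (hμ : ∀ s u t : ℝ, 0 ≤ s → s ≤ u → u ≤ t → t ≤ T →
      ‖(μ u t + μ s u) - μ s t‖ ≤ c * (t - s) ^ γ) :
    ∃ Λ : ℝ → ℝ → E,
      (∀ s t : ℝ, 0 ≤ s → s ≤ t → t ≤ T →
        ‖Λ s t - μ s t‖ ≤ c * (2 + (1 - ((2:ℝ) ^ (γ - 1))⁻¹)⁻¹) * (t - s) ^ γ) ∧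
      (∀ s u t : ℝ, 0 ≤ s → s ≤ u → u ≤ t → t ≤ T → Λ s u + Λ u t = Λ s t) := by
  have hμ0 : ∀ x : ℝ, 0 ≤ x → x ≤ T → μ x x = 0 := by
    intro x hx hxT
    have h := hμ x x x hx le_rfl le_rfl hxT
    rw [add_sub_cancel_right, sub_self, Real.zero_rpow (by linarith), mul_zero] at h
    exact norm_le_zero_iff.mp h
  set ρ : ℝ := ((2:ℝ) ^ (γ - 1))⁻¹ with hρdef
  have h2γ : (1:ℝ) < (2:ℝ) ^ (γ - 1) := by
    rw [show (1:ℝ) < (2:ℝ) ^ (γ-1) ↔ _ from Real.one_lt_rpow_iff_of_pos (by norm_num)]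
    exact Or.inl ⟨by norm_num, by linarith⟩
  have hρ0 : 0 < ρ := by positivity
  have hρ1 : ρ < 1 := by rw [hρdef, inv_lt_one_iff₀]; right; exact h2γ
  have hCauchy : ∀ s t : ℝ, 0 ≤ s → s ≤ t → t ≤ T →
      CauchySeq (fun n => sewB μ T s t n) := by
    intro s t hs hst htT
    refine cauchySeq_of_le_geometric ρ (c * (t - s) * T ^ (γ - 1)) hρ1 fun n => ?_
    rw [dist_eq_norm, norm_sub_rev]
    calc ‖sewB μ T s t (n+1) - sewB μ T s t n‖
        ≤ ∑ i ∈ Finset.range (2 ^ n),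
            (if s < (2 * (i : ℝ) + 1) * (T / 2 ^ (n + 1)) ∧
                (2 * (i : ℝ) + 1) * (T / 2 ^ (n + 1)) < t then
              c * (sewCl s t (((i : ℝ) + 1) * (T / 2 ^ n)) -
                sewCl s t ((i : ℝ) * (T / 2 ^ n))) ^ γ
            else 0) := sew_step hT hγ hμ hμ0 hs hst htT n
      _ ≤ c * (t - s) * T ^ (γ - 1) * ρ ^ n := sew_level_bound hT hc hγ hs hst htT n
  set Λ : ℝ → ℝ → E := fun s t => limUnder atTop (fun n => sewB μ T s t n) with hΛdef
  have hTend : ∀ s t : ℝ, 0 ≤ s → s ≤ t → t ≤ T →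
      Tendsto (fun n => sewB μ T s t n) atTop (nhds (Λ s t)) := by
    intro s t hs hst htT
    exact (hCauchy s t hs hst htT).tendsto_limUnder
  refine ⟨Λ, ?_, ?_⟩
  · -- bound
    intro s t hs hst htT
    have hB0 : sewB μ T s t 0 = μ s t := by
      rw [sewB, show (2:ℕ)^0 = 1 from rfl, Finset.sum_range_one]
      norm_num
      rw [sewCl_of_le_left s t 0 hs hst, sewCl_of_ge_right s t T htT hst]
    have key : ∀ N : ℕ, ‖sewB μ T s t N - μ s t‖ ≤
        c * (2 + (1 - ρ)⁻¹) * (t - s) ^ γ := by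
      intro N
      rcases eq_or_lt_of_le hst with heq | hlt
      · subst heq
        have hz : sewB μ T s s N = 0 := by
          rw [sewB]
          refine Finset.sum_eq_zero fun i _ => ?_
          have h1 : ∀ x : ℝ, sewCl s s x = s := fun x => le_antisymm
            (sewCl_le s s x le_rfl) (le_sewCl s s x)
          rw [h1, h1, hμ0 s hs (le_trans hst htT)]
        rw [hz, hμ0 s hs (le_trans hst htT), sub_zero, norm_zero, sub_self,
          Real.zero_rpow (by linarith), mul_zero]
      · calc ‖sewB μ T s t N - μ s t‖
            = ‖∑ n ∈ Finset.range N, (sewB μ T s t (n+1) - sewB μ T s t n)‖ := by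
              rw [Finset.sum_range_sub (fun n => sewB μ T s t n) N, hB0]
          _ ≤ ∑ n ∈ Finset.range N, ‖sewB μ T s t (n+1) - sewB μ T s t n‖ :=
              norm_sum_le _ _
          _ ≤ ∑ n ∈ Finset.range N, (∑ i ∈ Finset.range (2 ^ n),
              (if s < (2 * (i : ℝ) + 1) * (T / 2 ^ (n + 1)) ∧
                  (2 * (i : ℝ) + 1) * (T / 2 ^ (n + 1)) < t then
                c * (sewCl s t (((i : ℝ) + 1) * (T / 2 ^ n)) -
                  sewCl s t ((i : ℝ) * (T / 2 ^ n))) ^ γ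
              else 0)) :=
              Finset.sum_le_sum fun n _ => sew_step hT hγ hμ hμ0 hs hst htT n
          _ ≤ c * (2 + (1 - ρ)⁻¹) * (t - s) ^ γ := sew_sumD hT hc hγ hs hlt htT N
    have hTnorm : Tendsto (fun N => ‖sewB μ T s t N - μ s t‖) atTop
        (nhds ‖Λ s t - μ s t‖) :=
      ((hTend s t hs hst htT).sub tendsto_const_nhds).norm
    exact le_of_tendsto hTnorm (Eventually.of_forall key)
  · -- additivity
    intro s u t hs hsu hut htT
    have huT : u ≤ T := le_trans hut htT
    have hu0 : 0 ≤ u := le_trans hs hsu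
    have hst : s ≤ t := le_trans hsu hut
    have hbound : ∀ n : ℕ, ‖sewB μ T s u n + sewB μ T u t n - sewB μ T s t n‖ ≤
        c * T ^ γ * (((2:ℝ) ^ γ)⁻¹) ^ n := by
      intro n
      have hH : (0:ℝ) < T / 2 ^ n := by positivity
      set a : ℕ → ℝ := fun i => sewCl s t ((i : ℝ) * (T / 2 ^ n)) with hadef
      have ha0 : ∀ i, 0 ≤ a i := fun i => le_trans hs (le_sewCl s t _)
      have haT : ∀ i, a i ≤ T := fun i => le_trans (sewCl_le s t _ hst) htT
      have hamono : ∀ i, a i ≤ a (i + 1) := by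
        intro i
        refine sewCl_mono s t ?_
        push_cast
        nlinarith
      have haij : ∀ i j : ℕ, i + 1 ≤ j → a (i + 1) ≤ a j := by
        intro i j hij
        refine sewCl_mono s t ?_
        have h1 : ((i:ℝ) + 1) ≤ (j : ℝ) := by exact_mod_cast hij
        have := hH.le
        push_cast
        nlinarith
      have hsu' : ∀ i : ℕ, sewCl s u ((i : ℝ) * (T / 2 ^ n)) = min u (a i) :=
        fun i => sewCl_min s u t _ hsu hut
      have hsu'' : ∀ i : ℕ, sewCl s u (((i : ℝ) + 1) * (T / 2 ^ n)) = min u (a (i + 1)) := by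
        intro i
        rw [show ((i:ℝ) + 1) = ((i + 1 : ℕ) : ℝ) by push_cast; ring]
        exact sewCl_min s u t _ hsu hut
      have hut' : ∀ i : ℕ, sewCl u t ((i : ℝ) * (T / 2 ^ n)) = max u (a i) :=
        fun i => sewCl_max s u t _ hsu hut
      have hut'' : ∀ i : ℕ, sewCl u t (((i : ℝ) + 1) * (T / 2 ^ n)) = max u (a (i + 1)) := by
        intro i
        rw [show ((i:ℝ) + 1) = ((i + 1 : ℕ) : ℝ) by push_cast; ring]
        exact sewCl_max s u t _ hsu hut
      have hΔa : ∀ i : ℕ, a (i + 1) - a i ≤ T / 2 ^ n := by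
        intro i
        have hlip := sewCl_lip s t
          (show (i:ℝ) * (T / 2^n) ≤ ((i:ℝ)+1) * (T / 2^n) by nlinarith)
        have hc1 : ((i + 1 : ℕ) : ℝ) = (i : ℝ) + 1 := by push_cast; ring
        calc a (i + 1) - a i
            ≤ ((i:ℝ)+1) * (T / 2^n) - (i:ℝ) * (T / 2^n) := by simp only [hadef, hc1]; exact hlip
          _ = T / 2 ^ n := by ring
      have hsplit : sewB μ T s u n + sewB μ T u t n - sewB μ T s t n =
          ∑ i ∈ Finset.range (2 ^ n),
            (μ (min u (a i)) (min u (a (i + 1))) + μ (max u (a i)) (max u (a (i + 1)))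
              - μ (a i) (a (i + 1))) := by
        rw [sewB, sewB, sewB, ← Finset.sum_add_distrib, ← Finset.sum_sub_distrib]
        refine Finset.sum_congr rfl fun i _ => ?_
        rw [hsu' i, hsu'' i, hut' i, hut'' i]
        simp only [hadef]
        norm_cast
      rw [hsplit]
      have hterm : ∀ i ∈ Finset.range (2 ^ n),
          ‖μ (min u (a i)) (min u (a (i + 1))) + μ (max u (a i)) (max u (a (i + 1)))
            - μ (a i) (a (i + 1))‖ ≤
          (if a i < u ∧ u < a (i + 1) then c * (T / 2 ^ n) ^ γ else 0) := by
        intro i _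
        split_ifs with hcond
        · obtain ⟨h1, h2⟩ := hcond
          rw [min_eq_right h1.le, min_eq_left h2.le, max_eq_left h1.le, max_eq_right h2.le]
          have h3 := hμ (a i) u (a (i + 1)) (ha0 i) h1.le h2.le (haT (i + 1))
          rw [add_comm] at h3
          refine h3.trans (mul_le_mul_of_nonneg_left ?_ hc.le)
          exact Real.rpow_le_rpow (by linarith [hamono i]) (hΔa i) (by linarith)
        · push_neg at hcond
          rcases le_or_gt u (a i) with hua | hau
          · rw [min_eq_left hua, min_eq_left (le_trans hua (hamono i)),
              max_eq_right hua, max_eq_right (le_trans hua (hamono i)),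
              hμ0 u hu0 huT]
            simp
          · have hau1 : a (i + 1) ≤ u := hcond hau
            rw [min_eq_right (le_trans (hamono i) hau1|>.trans le_rfl),
              min_eq_right hau1, max_eq_left ((hamono i).trans hau1),
              max_eq_left hau1, hμ0 u hu0 huT]
            simp
      have hcard : ((Finset.range (2^n)).filter
          (fun i => a i < u ∧ u < a (i + 1))).card ≤ 1 := by
        rw [Finset.card_le_one]
        intro i hi j hj
        simp only [Finset.mem_filter] at hi hj
        by_contra hij
        rcases lt_or_gt_of_ne hij with h | h
        · have := haij i j h
          linarith [hi.2.2, hj.2.1]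
        · have := haij j i h
          linarith [hj.2.2, hi.2.1]
      calc ‖∑ i ∈ Finset.range (2 ^ n),
          (μ (min u (a i)) (min u (a (i + 1))) + μ (max u (a i)) (max u (a (i + 1)))
            - μ (a i) (a (i + 1)))‖
          ≤ ∑ i ∈ Finset.range (2 ^ n),
            ‖μ (min u (a i)) (min u (a (i + 1))) + μ (max u (a i)) (max u (a (i + 1)))
              - μ (a i) (a (i + 1))‖ := norm_sum_le _ _
        _ ≤ ∑ i ∈ Finset.range (2 ^ n),
            (if a i < u ∧ u < a (i + 1) then c * (T / 2 ^ n) ^ γ else 0) :=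
            Finset.sum_le_sum hterm
        _ = ((Finset.range (2^n)).filter (fun i => a i < u ∧ u < a (i + 1))).card
              • (c * (T / 2 ^ n) ^ γ) := by
            rw [← Finset.sum_filter, Finset.sum_const]
        _ ≤ 1 * (c * (T / 2 ^ n) ^ γ) := by
            rw [nsmul_eq_mul]
            refine mul_le_mul_of_nonneg_right ?_ (by positivity)
            exact_mod_cast hcard
        _ = c * T ^ γ * (((2:ℝ) ^ γ)⁻¹) ^ n := by
            rw [one_mul, sew_rpow_pow hT γ n]; ring
    have hρ2 : (0:ℝ) ≤ ((2:ℝ) ^ γ)⁻¹ := by positivity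
    have hρ2' : ((2:ℝ) ^ γ)⁻¹ < 1 := by
      rw [inv_lt_one_iff₀]; right
      rw [show (1:ℝ) < (2:ℝ) ^ γ ↔ _ from Real.one_lt_rpow_iff_of_pos (by norm_num)]
      exact Or.inl ⟨by norm_num, by linarith⟩
    have hlim0 : Tendsto (fun n : ℕ => c * T ^ γ * (((2:ℝ) ^ γ)⁻¹) ^ n) atTop (nhds 0) := by
      simpa using (tendsto_pow_atTop_nhds_zero_of_lt_one hρ2 hρ2').const_mul (c * T ^ γ)
    have hT3 : Tendsto (fun n => sewB μ T s u n + sewB μ T u t n - sewB μ T s t n) atTop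
        (nhds (Λ s u + Λ u t - Λ s t)) :=
      ((hTend s u hs hsu (le_trans hut htT)).add (hTend u t hu0 hut htT)).sub
        (hTend s t hs hst htT)
    have hle : ‖Λ s u + Λ u t - Λ s t‖ ≤ 0 :=
      le_of_tendsto_of_tendsto' hT3.norm hlim0 hbound
    exact sub_eq_zero.mp (norm_le_zero_iff.mp hle)
end

/-- **Additive sewing lemma (Feyel–de la Pradelle).**
Let `E` be a Banach space, `T > 0`, and let `μ` be an `E`-valued function on the simplex
`{(s,t) : 0 ≤ s ≤ t ≤ T}` (written `μ s t` for `μ_{ts}`) which is almost-additive: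
`‖(μ_{tu} + μ_{us}) − μ_{ts}‖ ≤ c |t−s|^γ` with `c > 0`, `γ > 1`. Then there is a function
`φ : [0,T] → E` and a constant `c' > 0` depending only on `c`, `γ` and `T` with
`‖(φ_t − φ_s) − μ_{ts}‖ ≤ c' |t−s|^γ`; moreover `φ` is unique up to an additive constant,
i.e. any other such `ψ` has the same increments as `φ`. -/
theorem additive_sewing {E : Type*} [NormedAddCommGroup E] [NormedSpace ℝ E] [CompleteSpace E]
    (T : ℝ) (hT : 0 < T) (c γ : ℝ) (hc : 0 < c) (hγ : 1 < γ) :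
    ∃ c' : ℝ, 0 < c' ∧
      ∀ μ : ℝ → ℝ → E,
        (∀ s u t : ℝ, 0 ≤ s → s ≤ u → u ≤ t → t ≤ T →
          ‖(μ u t + μ s u) - μ s t‖ ≤ c * (t - s) ^ γ) →
        ∃ φ : ℝ → E,
          (∀ s t : ℝ, 0 ≤ s → s ≤ t → t ≤ T →
            ‖(φ t - φ s) - μ s t‖ ≤ c' * (t - s) ^ γ) ∧
          ∀ (ψ : ℝ → E) (c'' : ℝ), 0 < c'' →
            (∀ s t : ℝ, 0 ≤ s → s ≤ t → t ≤ T →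
              ‖(ψ t - ψ s) - μ s t‖ ≤ c'' * (t - s) ^ γ) →
            ∀ s t : ℝ, 0 ≤ s → s ≤ t → t ≤ T → ψ t - ψ s = φ t - φ s := by
  set ρ : ℝ := ((2:ℝ) ^ (γ - 1))⁻¹ with hρdef
  have h2γ : (1:ℝ) < (2:ℝ) ^ (γ - 1) := by
    rw [show (1:ℝ) < (2:ℝ) ^ (γ-1) ↔ _ from Real.one_lt_rpow_iff_of_pos (by norm_num)]
    exact Or.inl ⟨by norm_num, by linarith⟩
  have hρ0 : 0 < ρ := by positivity
  have hρ1 : ρ < 1 := by rw [hρdef, inv_lt_one_iff₀]; right; exact h2γ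
  have hc' : 0 < c * (2 + (1 - ρ)⁻¹) := by
    have : 0 < (1 - ρ)⁻¹ := by
      rw [inv_pos]; linarith
    nlinarith
  refine ⟨c * (2 + (1 - ρ)⁻¹), hc', ?_⟩
  intro μ hμ
  obtain ⟨Λ, hΛbound, hΛadd⟩ := sew_lambda hT hc hγ μ hμ
  refine ⟨fun x => Λ 0 x, ?_, ?_⟩
  · intro s t hs hst htT
    have hincr : Λ 0 t - Λ 0 s = Λ s t := by
      have := hΛadd 0 s t le_rfl hs hst htT
      rw [← this]; abel
    rw [hincr]
    exact hΛbound s t hs hst htT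
  · intro ψ c'' hc'' hψ s t hs hst htT
    rcases eq_or_lt_of_le hst with heq | hlt
    · subst heq; simp
    have hφ : ∀ a b : ℝ, 0 ≤ a → a ≤ b → b ≤ T →
        ‖(Λ 0 b - Λ 0 a) - μ a b‖ ≤ c * (2 + (1 - ρ)⁻¹) * (b - a) ^ γ := by
      intro a b ha hab hbT
      have hincr : Λ 0 b - Λ 0 a = Λ a b := by
        have := hΛadd 0 a b le_rfl ha hab hbT
        rw [← this]; abel
      rw [hincr]
      exact hΛbound a b ha hab hbT
    set X : E := (ψ t - ψ s) - (Λ 0 t - Λ 0 s) with hXdef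
    have hts : (0:ℝ) < t - s := by linarith
    have hX : ∀ n : ℕ, 1 ≤ n →
        ‖X‖ ≤ (c'' + c * (2 + (1 - ρ)⁻¹)) * ((t - s) ^ γ * (n:ℝ) ^ ((1:ℝ) - γ)) := by
      intro n hn
      have hn0 : (0:ℝ) < (n:ℝ) := by exact_mod_cast hn
      set d : ℝ := (t - s) / n with hddef
      have hd0 : 0 < d := by positivity
      set p : ℕ → ℝ := fun i => s + i * d with hpdef
      have hp0 : p 0 = s := by simp [hpdef]
      have hpn : p n = t := by
        simp only [hpdef, hddef]
        field_simp
        ring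
      have hpmono : ∀ i j : ℕ, i ≤ j → p i ≤ p j := by
        intro i j hij
        simp only [hpdef]
        have : (i:ℝ) ≤ (j:ℝ) := by exact_mod_cast hij
        nlinarith
      have hpvalid : ∀ i : ℕ, i ≤ n → 0 ≤ p i ∧ p i ≤ T := by
        intro i hi
        constructor
        · have : (0:ℝ) ≤ (i:ℝ) * d := by positivity
          simp only [hpdef]; linarith
        · have := hpmono i n hi
          rw [hpn] at this
          linarith
      have hstep : ∀ i : ℕ, i < n →
          ‖(ψ (p (i+1)) - Λ 0 (p (i+1))) - (ψ (p i) - Λ 0 (p i))‖ ≤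
            (c'' + c * (2 + (1 - ρ)⁻¹)) * d ^ γ := by
        intro i hi
        have h1 : 0 ≤ p i := (hpvalid i (by omega)).1
        have h2 : p i ≤ p (i+1) := hpmono i (i+1) (by omega)
        have h3 : p (i+1) ≤ T := (hpvalid (i+1) (by omega)).2
        have hψi := hψ (p i) (p (i+1)) h1 h2 h3
        have hφi := hφ (p i) (p (i+1)) h1 h2 h3
        have hdiff : p (i+1) - p i = d := by
          simp only [hpdef]
          push_cast
          ring
        rw [hdiff] at hψi hφi
        calc ‖(ψ (p (i+1)) - Λ 0 (p (i+1))) - (ψ (p i) - Λ 0 (p i))‖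
            = ‖((ψ (p (i+1)) - ψ (p i)) - μ (p i) (p (i+1))) -
                ((Λ 0 (p (i+1)) - Λ 0 (p i)) - μ (p i) (p (i+1)))‖ := by
              congr 1; abel
          _ ≤ ‖(ψ (p (i+1)) - ψ (p i)) - μ (p i) (p (i+1))‖ +
              ‖(Λ 0 (p (i+1)) - Λ 0 (p i)) - μ (p i) (p (i+1))‖ := norm_sub_le _ _
          _ ≤ c'' * d ^ γ + c * (2 + (1 - ρ)⁻¹) * d ^ γ := add_le_add hψi hφi
          _ = (c'' + c * (2 + (1 - ρ)⁻¹)) * d ^ γ := by ring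
      have hXsum : X = ∑ i ∈ Finset.range n,
          ((ψ (p (i+1)) - Λ 0 (p (i+1))) - (ψ (p i) - Λ 0 (p i))) := by
        rw [Finset.sum_range_sub (fun i => ψ (p i) - Λ 0 (p i)) n, hp0, hpn, hXdef]
        abel
      calc ‖X‖ ≤ ∑ i ∈ Finset.range n, ‖(ψ (p (i+1)) - Λ 0 (p (i+1))) - (ψ (p i) - Λ 0 (p i))‖ := by
            rw [hXsum]; exact norm_sum_le _ _
        _ ≤ ∑ i ∈ Finset.range n, (c'' + c * (2 + (1 - ρ)⁻¹)) * d ^ γ :=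
            Finset.sum_le_sum fun i hi => hstep i (Finset.mem_range.mp hi)
        _ = n * ((c'' + c * (2 + (1 - ρ)⁻¹)) * d ^ γ) := by
            rw [Finset.sum_const, Finset.card_range, nsmul_eq_mul]
        _ = (c'' + c * (2 + (1 - ρ)⁻¹)) * ((t - s) ^ γ * (n:ℝ) ^ ((1:ℝ) - γ)) := by
            rw [hddef, Real.div_rpow hts.le hn0.le,
              Real.rpow_sub hn0, Real.rpow_one]
            field_simp
      -- end hX
    have hlim : Tendsto (fun n : ℕ =>
        (c'' + c * (2 + (1 - ρ)⁻¹)) * ((t - s) ^ γ * (n:ℝ) ^ ((1:ℝ) - γ))) atTop (nhds 0) := by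
      have h1 : Tendsto (fun x : ℝ => x ^ (-(γ - 1))) atTop (nhds 0) :=
        tendsto_rpow_neg_atTop (by linarith)
      have h2 : Tendsto (fun n : ℕ => ((n:ℝ)) ^ ((1:ℝ) - γ)) atTop (nhds 0) := by
        have h3 : Tendsto (fun n : ℕ => (n:ℝ)) atTop atTop := tendsto_natCast_atTop_atTop
        have := h1.comp h3
        simpa [Function.comp_def, show -(γ - 1) = (1:ℝ) - γ by ring] using this
      have := h2.const_mul ((c'' + c * (2 + (1 - ρ)⁻¹)) * (t - s) ^ γ)
      simpa [mul_assoc] using this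
    have hnorm : ‖X‖ ≤ 0 := by
      refine ge_of_tendsto hlim ?_
      filter_upwards [eventually_ge_atTop 1] with n hn
      exact hX n hn
    have hX0 : X = 0 := norm_le_zero_iff.mp hnorm
    rw [hXdef] at hX0
    exact sub_eq_zero.mp hX0
end

section
/- Let T>0 and 0<α,β≤1 with α+β>1. Let f,g : [0,T] → ℝ be respectively α-Hölder and β-Hölder continuous. Then there exists a function φ : [0,T] → ℝ and a constant c>0 such that |φ_t − φ_s − f_s·(g_t − g_s)| ≤ c|t−s|^{α+β} for all 0≤s≤t≤T; moreover any two such functions φ differ by an additive constant. (The function φ is the Young integral ∫₀^• f_s dg_s.) -/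
open Finset

/-- Riemann sum of `f dg` along the first `m` intervals of the partition `π`. -/
def youngRS (f g : ℝ → ℝ) (π : ℕ → ℝ) (m : ℕ) : ℝ :=
  ∑ i ∈ Finset.range m, f (π i) * (g (π (i+1)) - g (π i))

lemma youngMono {π : ℕ → ℝ} {m : ℕ} (h : ∀ i < m, π i ≤ π (i+1)) :
    ∀ i k, i ≤ k → k ≤ m → π i ≤ π k := by
  intro i k
  induction k with
  | zero =>
    intro hik _
    have : i = 0 := by omega
    subst this; exact le_refl _
  | succ k ih =>
    intro hik hkm
    rcases Nat.eq_or_lt_of_le hik with rfl | hlt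
    · exact le_refl _
    · exact (ih (Nat.lt_succ_iff.mp hlt) (le_trans (Nat.le_succ k) hkm)).trans (h k (by omega))

lemma youngRS_remove (f g : ℝ → ℝ) (π π' : ℕ → ℝ) (jj r : ℕ)
    (hπ' : ∀ i, π' i = π (if i < jj + 1 then i else i + 1)) :
    youngRS f g π (jj + 2 + r)
      = youngRS f g π' (jj + 1 + r)
        + (f (π (jj+1)) - f (π jj)) * (g (π (jj+2)) - g (π (jj+1))) := by
  induction r with
  | zero =>
    unfold youngRS
    rw [show jj + 2 + 0 = jj + 1 + 1 by omega, show jj + 1 + 0 = jj + 1 by omega]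
    rw [Finset.sum_range_succ, Finset.sum_range_succ, Finset.sum_range_succ]
    have h1 : ∀ i ∈ Finset.range jj, f (π' i) * (g (π' (i+1)) - g (π' i))
        = f (π i) * (g (π (i+1)) - g (π i)) := by
      intro i hi
      simp only [Finset.mem_range] at hi
      rw [hπ' i, hπ' (i+1), if_pos (by omega), if_pos (by omega)]
    rw [Finset.sum_congr rfl h1]
    rw [hπ' jj, hπ' (jj+1), if_pos (by omega : jj < jj + 1),
      if_neg (by omega : ¬ (jj + 1 < jj + 1))]
    ring
  | succ r ih =>
    unfold youngRS at ih ⊢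
    rw [show jj + 2 + (r + 1) = (jj + 2 + r) + 1 by omega,
      show jj + 1 + (r + 1) = (jj + 1 + r) + 1 by omega]
    rw [Finset.sum_range_succ, Finset.sum_range_succ]
    rw [hπ' (jj + 1 + r), hπ' (jj + 1 + r + 1),
      if_neg (by omega : ¬ (jj + 1 + r < jj + 1)),
      if_neg (by omega : ¬ (jj + 1 + r + 1 < jj + 1)),
      show jj + 1 + r + 1 = jj + 2 + r by omega]
    linarith [ih]

lemma youngPigeon {π : ℕ → ℝ} {m : ℕ} (h : ∀ i < m + 2, π i ≤ π (i+1)) :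
    ∃ jj ≤ m, π (jj+2) - π jj ≤ 2 * (π (m+2) - π 0) / ((m:ℝ)+1) := by
  have hm : (0:ℝ) < (m:ℝ) + 1 := by positivity
  have key : ∀ X : ℝ, ((m:ℝ) + 1) * (2 * (π (m + 2) - π 0) / ((m:ℝ)+1)) = 2 * (π (m+2) - π 0) := by
    intro X; field_simp
  have hsum : ∑ jj ∈ Finset.range (m+1), (π (jj+2) - π jj)
      ≤ ∑ jj ∈ Finset.range (m+1), 2 * (π (m+2) - π 0) / ((m:ℝ)+1) := by
    have e1 : ∑ jj ∈ Finset.range (m+1), (π (jj+2) - π jj)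
        = (π (m+2) - π 1) + (π (m+1) - π 0) := by
      have t1 := Finset.sum_range_sub (fun i => π (i+1)) (m+1)
      have t2 := Finset.sum_range_sub π (m+1)
      have e : ∀ jj, π (jj+2) - π jj = (π (jj+1+1) - π (jj+1)) + (π (jj+1) - π jj) := by
        intro jj; ring
      rw [Finset.sum_congr rfl (fun jj _ => e jj), Finset.sum_add_distrib, t2]
      rw [t1]
    rw [e1, Finset.sum_const, Finset.card_range, nsmul_eq_mul]
    push_cast
    rw [key 0]
    have h1 : π 0 ≤ π 1 := h 0 (by omega)
    have h2 : π (m+1) ≤ π (m+2) := h (m+1) (by omega)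
    linarith
  obtain ⟨jj, hjj, hle⟩ := Finset.exists_le_of_sum_le ⟨0, Finset.mem_range.mpr (by omega)⟩ hsum
  exact ⟨jj, by simp only [Finset.mem_range] at hjj; omega, hle⟩

/-- Hölder product bound for a single increment term. -/
lemma youngTermBound {T α β Cf Cg : ℝ} {f g : ℝ → ℝ} (hCf : 0 < Cf) (hCg : 0 < Cg)
    (hα : 0 < α) (hβ : 0 < β)
    (hf : ∀ s t : ℝ, 0 ≤ s → s ≤ t → t ≤ T → |f t - f s| ≤ Cf * (t - s) ^ α)
    (hg : ∀ s t : ℝ, 0 ≤ s → s ≤ t → t ≤ T → |g t - g s| ≤ Cg * (t - s) ^ β)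
    {a b u v δ : ℝ} (ha : 0 ≤ a) (hab : a ≤ b) (hb : b ≤ T)
    (hu : 0 ≤ u) (huv : u ≤ v) (hv : v ≤ T)
    (hδ1 : b - a ≤ δ) (hδ2 : v - u ≤ δ) :
    |(f b - f a) * (g v - g u)| ≤ Cf * Cg * (δ ^ α * δ ^ β) := by
  rw [abs_mul]
  have h1 : |f b - f a| ≤ Cf * δ ^ α := by
    refine (hf a b ha hab hb).trans ?_
    have : (b - a) ^ α ≤ δ ^ α :=
      Real.rpow_le_rpow (by linarith) hδ1 hα.le
    nlinarith
  have h2 : |g v - g u| ≤ Cg * δ ^ β := by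
    refine (hg u v hu huv hv).trans ?_
    have : (v - u) ^ β ≤ δ ^ β :=
      Real.rpow_le_rpow (by linarith) hδ2 hβ.le
    nlinarith
  have hδα : (0:ℝ) ≤ δ ^ α := Real.rpow_nonneg (by linarith) _
  have hδβ : (0:ℝ) ≤ δ ^ β := Real.rpow_nonneg (by linarith) _
  calc |f b - f a| * |g v - g u| ≤ (Cf * δ ^ α) * (Cg * δ ^ β) := by
        apply mul_le_mul h1 h2 (abs_nonneg _) (by positivity)
    _ = Cf * Cg * (δ ^ α * δ ^ β) := by ring

/-- Young's maximal inequality for an arbitrary partition. -/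
lemma youngMax {T α β Cf Cg : ℝ} {f g : ℝ → ℝ} (hCf : 0 < Cf) (hCg : 0 < Cg)
    (hα : 0 < α) (hβ : 0 < β) (hαβ : 1 < α + β)
    (hf : ∀ s t : ℝ, 0 ≤ s → s ≤ t → t ≤ T → |f t - f s| ≤ Cf * (t - s) ^ α)
    (hg : ∀ s t : ℝ, 0 ≤ s → s ≤ t → t ≤ T → |g t - g s| ≤ Cg * (t - s) ^ β) :
    ∀ m : ℕ, ∀ π : ℕ → ℝ, (∀ i < m + 1, π i ≤ π (i+1)) → 0 ≤ π 0 → π (m+1) ≤ T →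
      |youngRS f g π (m+1) - f (π 0) * (g (π (m+1)) - g (π 0))|
        ≤ Cf * Cg * (∑ k ∈ Finset.range m, (2 / ((k:ℝ)+1)) ^ (α+β)) * (π (m+1) - π 0) ^ (α+β) := by
  intro m
  induction m with
  | zero =>
    intro π hmono h0 hT'
    simp only [Finset.range_zero, Finset.sum_empty, mul_zero, zero_mul]
    unfold youngRS
    simp [Finset.sum_range_one]
  | succ m ih =>
    intro π hmono h0 hT'
    obtain ⟨jj, hjjm, hjj⟩ := youngPigeon hmono
    set π' : ℕ → ℝ := fun i => π (if i < jj + 1 then i else i + 1) with hπ'def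
    have hπ' : ∀ i, π' i = π (if i < jj + 1 then i else i + 1) := fun _ => rfl
    have hmonoAll := youngMono hmono
    have hr : m + 1 + 1 = jj + 2 + (m - jj) := by omega
    have hremove := youngRS_remove f g π π' jj (m - jj) hπ'
    rw [show jj + 2 + (m - jj) = m + 1 + 1 by omega, show jj + 1 + (m - jj) = m + 1 by omega]
      at hremove
    -- properties of π'
    have hπ'0 : π' 0 = π 0 := by rw [hπ' 0, if_pos (by omega)]
    have hπ'last : π' (m+1) = π (m+1+1) := by rw [hπ' (m+1), if_neg (by omega)]
    have hmono' : ∀ i < m + 1, π' i ≤ π' (i+1) := by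
      intro i hi
      rw [hπ' i, hπ' (i+1)]
      split <;> split <;> (apply hmonoAll <;> omega)
    have hIH := ih π' hmono' (by rw [hπ'0]; exact h0) (by rw [hπ'last]; exact hT')
    rw [hπ'0, hπ'last] at hIH
    -- bound on the removed term
    have hd0 : (0:ℝ) ≤ π (jj+2) - π jj := by
      have := hmonoAll jj (jj+2) (by omega) (by omega)
      linarith
    have hX : |(f (π (jj+1)) - f (π jj)) * (g (π (jj+2)) - g (π (jj+1)))|
        ≤ Cf * Cg * ((2 / ((m:ℝ)+1)) ^ (α+β) * (π (m+1+1) - π 0) ^ (α+β)) := by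
      have hb1 : π jj ≤ π (jj+1) := hmonoAll jj (jj+1) (by omega) (by omega)
      have hb2 : π (jj+1) ≤ π (jj+2) := hmonoAll (jj+1) (jj+2) (by omega) (by omega)
      have h0jj : 0 ≤ π jj := le_trans h0 (hmonoAll 0 jj (by omega) (by omega))
      have hjjT : π (jj+2) ≤ T := le_trans (hmonoAll (jj+2) (m+1+1) (by omega) (by omega)) hT'
      have hbd := youngTermBound hCf hCg hα hβ hf hg h0jj hb1 (le_trans hb2 hjjT)
        (le_trans h0jj hb1) hb2 hjjT
        (by linarith : π (jj+1) - π jj ≤ π (jj+2) - π jj)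
        (by linarith : π (jj+2) - π (jj+1) ≤ π (jj+2) - π jj)
      refine hbd.trans ?_
      have hts : (0:ℝ) ≤ π (m+1+1) - π 0 := by
        have := hmonoAll 0 (m+1+1) (by omega) (by omega); linarith
      have hd' : (0:ℝ) ≤ 2 * (π (m+1+1) - π 0) / ((m:ℝ)+1) := by positivity
      have hmerge : (π (jj+2) - π jj) ^ α * (π (jj+2) - π jj) ^ β
          = (π (jj+2) - π jj) ^ (α+β) :=
        (Real.rpow_add' hd0 (by linarith)).symm
      rw [hmerge]
      have hle1 : (π (jj+2) - π jj) ^ (α+β) ≤ (2 * (π (m+1+1) - π 0) / ((m:ℝ)+1)) ^ (α+β) :=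
        Real.rpow_le_rpow hd0 hjj (by linarith)
      have heq : (2 * (π (m+1+1) - π 0) / ((m:ℝ)+1)) ^ (α+β)
          = (2 / ((m:ℝ)+1)) ^ (α+β) * (π (m+1+1) - π 0) ^ (α+β) := by
        rw [show 2 * (π (m+1+1) - π 0) / ((m:ℝ)+1) = (2 / ((m:ℝ)+1)) * (π (m+1+1) - π 0) by ring]
        exact Real.mul_rpow (by positivity) hts
      rw [heq] at hle1
      exact mul_le_mul_of_nonneg_left hle1 (by positivity)
    -- combine
    rw [hremove]
    rw [Finset.sum_range_succ]
    push_cast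
    have htri : |youngRS f g π' (m+1) + (f (π (jj+1)) - f (π jj)) * (g (π (jj+2)) - g (π (jj+1)))
        - f (π 0) * (g (π (m+1+1)) - g (π 0))|
        ≤ |youngRS f g π' (m+1) - f (π 0) * (g (π (m+1+1)) - g (π 0))|
          + |(f (π (jj+1)) - f (π jj)) * (g (π (jj+2)) - g (π (jj+1)))| := by
      have := abs_add_le (youngRS f g π' (m+1) - f (π 0) * (g (π (m+1+1)) - g (π 0)))
        ((f (π (jj+1)) - f (π jj)) * (g (π (jj+2)) - g (π (jj+1))))
      calc _ = |youngRS f g π' (m+1) - f (π 0) * (g (π (m+1+1)) - g (π 0))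
          + (f (π (jj+1)) - f (π jj)) * (g (π (jj+2)) - g (π (jj+1)))| := by ring_nf
        _ ≤ _ := this
    refine htri.trans ?_
    have hts : (0:ℝ) ≤ (π (m+1+1) - π 0) ^ (α+β) := by
      have := hmonoAll 0 (m+1+1) (by omega) (by omega)
      exact Real.rpow_nonneg (by linarith) _
    nlinarith [hIH, hX]

lemma youngSummable {θ : ℝ} (hθ : 1 < θ) : Summable (fun k : ℕ => (2 / ((k:ℝ)+1)) ^ θ) := by
  have h1 : Summable (fun k : ℕ => 1 / ((k:ℝ)) ^ θ) := Real.summable_one_div_nat_rpow.mpr hθ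
  have h2 : Summable (fun k : ℕ => 1 / (((k:ℕ)+1:ℕ):ℝ) ^ θ) :=
    (summable_nat_add_iff 1).mpr h1
  have h3 : Summable (fun k : ℕ => (2:ℝ) ^ θ * (1 / (((k:ℝ))+1) ^ θ)) := by
    apply Summable.mul_left
    convert h2 using 2 with k
    push_cast
    rfl
    push_cast
    rfl
  apply h3.congr
  intro k
  have hk : (0:ℝ) < (k:ℝ) + 1 := by positivity
  rw [Real.div_rpow (by norm_num) hk.le]
  ring

lemma youngZ_bound {θ : ℝ} (hθ : 1 < θ) (m : ℕ) :
    ∑ k ∈ Finset.range m, (2 / ((k:ℝ)+1)) ^ θ ≤ ∑' k : ℕ, (2 / ((k:ℝ)+1)) ^ θ :=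
  Summable.sum_le_tsum _ (fun k _ => Real.rpow_nonneg (by positivity) _) (youngSummable hθ)

lemma youngPairSum (h : ℕ → ℝ) (n : ℕ) :
    ∑ i ∈ Finset.range (2*n), h i = ∑ i ∈ Finset.range n, (h (2*i) + h (2*i+1)) := by
  induction n with
  | zero => simp
  | succ n ih =>
    rw [Finset.sum_range_succ, ← ih, show 2*(n+1) = (2*n+1)+1 by omega,
      Finset.sum_range_succ, Finset.sum_range_succ]
    ring

lemma min_sub_min_le {a b c : ℝ} (hab : a ≤ b) : min b c - min a c ≤ b - a := by
  rcases min_choice a c with h2 | h2 <;> rcases min_choice b c with h3 | h3 <;> rw [h2, h3] <;>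
    linarith [min_le_left a c, min_le_right a c, min_le_left b c, min_le_right b c]

/-- `N * (A/N)^θ = A^θ * N^(1-θ)` for `N > 0`, `A ≥ 0`. -/
lemma youngPowHelper {θ A N : ℝ} (hN : 0 < N) (hA : 0 ≤ A) :
    N * (A / N) ^ θ = A ^ θ * N ^ (1 - θ) := by
  rw [Real.div_rpow hA hN.le, Real.rpow_sub hN, Real.rpow_one]
  field_simp

/-- The `n`-th dyadic approximation to the Young integral `∫₀ᵗ f dg`. -/
noncomputable def youngPhiN (f g : ℝ → ℝ) (T : ℝ) (n : ℕ) (t : ℝ) : ℝ :=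
  youngRS f g (fun i => min ((i:ℝ) * T / 2^n) t) (2^n)

lemma youngGeom {T α β : ℝ} (hT : 0 < T) (hαβ : 1 < α + β) (n : ℕ) :
    (2:ℝ)^n * ((T/2^n) ^ α * (T/2^n) ^ β) ≤ T^(α+β) * ((2:ℝ)^((1:ℝ)-(α+β)))^n := by
  have h2n : (0:ℝ) < 2^n := by positivity
  have hq : (0:ℝ) ≤ T/2^n := by positivity
  rw [← Real.rpow_add' hq (by linarith)]
  rw [youngPowHelper h2n hT.le]
  have : ((2:ℝ)^n) ^ ((1:ℝ)-(α+β)) = ((2:ℝ)^((1:ℝ)-(α+β)))^n := by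
    rw [← Real.rpow_natCast (2:ℝ) n, ← Real.rpow_mul (by norm_num), mul_comm,
      Real.rpow_mul (by norm_num), Real.rpow_natCast]
  rw [this]

lemma youngSplitTerm (f g : ℝ → ℝ) {u v s : ℝ} (huv : u ≤ v) :
    f u * (g v - g u) - f (min u s) * (g (min v s) - g (min u s))
      - f (max u s) * (g (max v s) - g (max u s))
    = -((f (max u s) - f u) * (g (max v s) - g (max u s))) := by
  rcases le_total v s with h1 | h1
  · rw [min_eq_left (huv.trans h1), min_eq_left h1, max_eq_right (huv.trans h1), max_eq_right h1]
    ring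
  · rcases le_total s u with h2 | h2
    · rw [min_eq_right h2, min_eq_right (h2.trans huv), max_eq_left h2, max_eq_left (h2.trans huv)]
      ring
    · rw [min_eq_left h2, min_eq_right h1, max_eq_right h2, max_eq_left h1]
      ring

section YoungMain

variable {T α β Cf Cg : ℝ} {f g : ℝ → ℝ}

/-- Dyadic refinement estimate. -/
lemma youngRefine (hT : 0 < T) (hCf : 0 < Cf) (hCg : 0 < Cg)
    (hα : 0 < α) (hβ : 0 < β) (hαβ : 1 < α + β)
    (hf : ∀ s t : ℝ, 0 ≤ s → s ≤ t → t ≤ T → |f t - f s| ≤ Cf * (t - s) ^ α)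
    (hg : ∀ s t : ℝ, 0 ≤ s → s ≤ t → t ≤ T → |g t - g s| ≤ Cg * (t - s) ^ β)
    (n : ℕ) (t : ℝ) (ht0 : 0 ≤ t) (htT : t ≤ T) :
    |youngPhiN f g T (n+1) t - youngPhiN f g T n t|
      ≤ (Cf * Cg * T^(α+β)) * ((2:ℝ)^((1:ℝ)-(α+β)))^n := by
  set q : ℕ → ℝ := fun i => min ((i:ℝ) * T / 2^(n+1)) t with hq
  set p : ℕ → ℝ := fun i => min ((i:ℝ) * T / 2^n) t with hp
  have h2n : (0:ℝ) < 2^n := by positivity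
  have h2n1 : (0:ℝ) < 2^(n+1) := by positivity
  have hgrid : ∀ i : ℕ, ((2*i:ℕ):ℝ) * T / 2^(n+1) = (i:ℝ) * T / 2^n := by
    intro i; push_cast; rw [pow_succ]; field_simp
  have hq2 : ∀ i : ℕ, q (2*i) = p i := by
    intro i; simp only [hq, hp, hgrid i]
  -- pair up the refined sum
  have hpair : youngPhiN f g T (n+1) t
      = ∑ i ∈ Finset.range (2^n),
          (f (q (2*i)) * (g (q (2*i+1)) - g (q (2*i)))
            + f (q (2*i+1)) * (g (q (2*i+1+1)) - g (q (2*i+1)))) := by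
    unfold youngPhiN youngRS
    rw [show (2:ℕ)^(n+1) = 2 * 2^n by rw [pow_succ]; omega]
    exact youngPairSum _ _
  have hplain : youngPhiN f g T n t
      = ∑ i ∈ Finset.range (2^n), f (p i) * (g (p (i+1)) - g (p i)) := rfl
  rw [hpair, hplain, ← Finset.sum_sub_distrib]
  refine le_trans (Finset.abs_sum_le_sum_abs _ _) ?_
  have hbound : ∀ i ∈ Finset.range (2^n),
      |f (q (2*i)) * (g (q (2*i+1)) - g (q (2*i)))
        + f (q (2*i+1)) * (g (q (2*i+1+1)) - g (q (2*i+1)))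
        - f (p i) * (g (p (i+1)) - g (p i))|
      ≤ Cf * Cg * ((T/2^n) ^ α * (T/2^n) ^ β) := by
    intro i _
    have e1 : q (2*i) = p i := hq2 i
    have e2 : q (2*i+1+1) = p (i+1) := by
      have : 2*i+1+1 = 2*(i+1) := by omega
      rw [this, hq2 (i+1)]
    rw [e1, e2]
    have halg : f (p i) * (g (q (2*i+1)) - g (p i))
        + f (q (2*i+1)) * (g (p (i+1)) - g (q (2*i+1)))
        - f (p i) * (g (p (i+1)) - g (p i))
        = (f (q (2*i+1)) - f (p i)) * (g (p (i+1)) - g (q (2*i+1))) := by ring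
    rw [halg]
    -- grid monotonicity facts
    have hg1 : ((2*i:ℕ):ℝ) * T / 2^(n+1) ≤ ((2*i+1:ℕ):ℝ) * T / 2^(n+1) := by
      apply div_le_div_of_nonneg_right ?_ h2n1.le |>.trans_eq rfl
      push_cast; nlinarith
    have hg2 : ((2*i+1:ℕ):ℝ) * T / 2^(n+1) ≤ ((2*(i+1):ℕ):ℝ) * T / 2^(n+1) := by
      apply div_le_div_of_nonneg_right ?_ h2n1.le |>.trans_eq rfl
      push_cast; nlinarith
    have hd1 : ((2*i+1:ℕ):ℝ) * T / 2^(n+1) - ((2*i:ℕ):ℝ) * T / 2^(n+1) = T / 2^(n+1) := by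
      push_cast; field_simp; ring
    have hd2 : ((2*(i+1):ℕ):ℝ) * T / 2^(n+1) - ((2*i+1:ℕ):ℝ) * T / 2^(n+1) = T / 2^(n+1) := by
      push_cast; field_simp; ring
    have hqmono1 : p i ≤ q (2*i+1) := by
      rw [← e1]; exact min_le_min hg1 (le_refl t)
    have hqmono2 : q (2*i+1) ≤ p (i+1) := by
      rw [← hq2 (i+1), show 2*(i+1) = 2*i+1+1 by omega]
      refine min_le_min ?_ (le_refl t)
      rw [show ((2*i+1+1:ℕ):ℝ) = ((2*(i+1):ℕ):ℝ) by push_cast; ring]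
      exact hg2
    have hp0 : 0 ≤ p i := le_min (by positivity) ht0
    have hq1T : q (2*i+1) ≤ T := le_trans (min_le_right _ _) htT
    have hp1T : p (i+1) ≤ T := le_trans (min_le_right _ _) htT
    have hδ1 : q (2*i+1) - p i ≤ T / 2^(n+1) := by
      rw [← e1]
      exact (min_sub_min_le hg1).trans_eq hd1
    have hδ2 : p (i+1) - q (2*i+1) ≤ T / 2^(n+1) := by
      rw [← hq2 (i+1)]
      refine le_trans ?_ hd2.le
      rw [show ((2*(i+1):ℕ):ℝ) * T / 2^(n+1) - ((2*i+1:ℕ):ℝ) * T / 2^(n+1)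
          = ((2*(i+1):ℕ):ℝ) * T / 2^(n+1) - ((2*i+1:ℕ):ℝ) * T / 2^(n+1) from rfl]
      exact min_sub_min_le hg2
    have hδδ : T / 2^(n+1) ≤ T / 2^n := by
      apply div_le_div_of_nonneg_left hT.le h2n
      rw [pow_succ]; nlinarith
    have hb := youngTermBound hCf hCg hα hβ hf hg hp0 hqmono1 hq1T
      (le_trans hp0 hqmono1) hqmono2 hp1T (hδ1.trans hδδ) (hδ2.trans hδδ)
    exact hb
  refine le_trans (Finset.sum_le_sum hbound) ?_
  rw [Finset.sum_const, Finset.card_range, nsmul_eq_mul]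
  push_cast
  calc (2:ℝ)^n * (Cf * Cg * ((T/2^n) ^ α * (T/2^n) ^ β))
      = Cf * Cg * ((2:ℝ)^n * ((T/2^n) ^ α * (T/2^n) ^ β)) := by ring
    _ ≤ Cf * Cg * (T^(α+β) * ((2:ℝ)^((1:ℝ)-(α+β)))^n) := by
        apply mul_le_mul_of_nonneg_left (youngGeom hT hαβ n) (by positivity)
    _ = (Cf * Cg * T^(α+β)) * ((2:ℝ)^((1:ℝ)-(α+β)))^n := by ring


/-- Difference of dyadic approximations is a Riemann sum over `[s,t]` up to a small error. -/
lemma youngDiff (hT : 0 < T) (hCf : 0 < Cf) (hCg : 0 < Cg)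
    (hα : 0 < α) (hβ : 0 < β) (hαβ : 1 < α + β)
    (hf : ∀ s t : ℝ, 0 ≤ s → s ≤ t → t ≤ T → |f t - f s| ≤ Cf * (t - s) ^ α)
    (hg : ∀ s t : ℝ, 0 ≤ s → s ≤ t → t ≤ T → |g t - g s| ≤ Cg * (t - s) ^ β)
    (n : ℕ) (s t : ℝ) (hs0 : 0 ≤ s) (hst : s ≤ t) (htT : t ≤ T) :
    |youngPhiN f g T n t - youngPhiN f g T n s
      - youngRS f g (fun i => max (min ((i:ℝ) * T / 2^n) t) s) (2^n)|
      ≤ (Cf * Cg * T^(α+β)) * ((2:ℝ)^((1:ℝ)-(α+β)))^n := by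
  have ht0 : 0 ≤ t := hs0.trans hst
  set pt : ℕ → ℝ := fun i => min ((i:ℝ) * T / 2^n) t with hpt
  set ρ : ℕ → ℝ := fun i => max (pt i) s with hρ
  have h2n : (0:ℝ) < 2^n := by positivity
  have hgmono : ∀ i : ℕ, (i:ℝ) * T / 2^n ≤ ((i:ℕ)+1:ℝ) * T / 2^n := by
    intro i
    apply div_le_div_of_nonneg_right ?_ h2n.le
    nlinarith [Nat.cast_nonneg (α := ℝ) i]
  have hgdiff : ∀ i : ℕ, ((i:ℕ)+1:ℝ) * T / 2^n - (i:ℝ) * T / 2^n = T / 2^n := by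
    intro i; field_simp; ring
  have hptmono : ∀ i : ℕ, pt i ≤ pt (i+1) := by
    intro i
    refine min_le_min ?_ (le_refl t)
    push_cast
    exact hgmono i
  have hsmin : ∀ i : ℕ, min ((i:ℝ) * T / 2^n) s = min (pt i) s := by
    intro i
    simp only [hpt]
    rw [min_assoc, min_eq_right hst]
  have hid : youngPhiN f g T n t - youngPhiN f g T n s - youngRS f g ρ (2^n)
      = ∑ i ∈ Finset.range (2^n),
          -((f (ρ i) - f (pt i)) * (g (ρ (i+1)) - g (ρ i))) := by
    unfold youngPhiN youngRS
    rw [← Finset.sum_sub_distrib, ← Finset.sum_sub_distrib]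
    refine Finset.sum_congr rfl ?_
    intro i _
    have hfold : ∀ j : ℕ, ((j:ℝ) * T / 2^n ⊓ t) = pt j := fun j => rfl
    simp only [hsmin, hfold]
    exact youngSplitTerm f g (hptmono i)
  rw [hid]
  refine le_trans (Finset.abs_sum_le_sum_abs _ _) ?_
  have hbound : ∀ i ∈ Finset.range (2^n),
      |-((f (ρ i) - f (pt i)) * (g (ρ (i+1)) - g (ρ i)))|
        ≤ Cf * Cg * ((T/2^n) ^ α * (T/2^n) ^ β) := by
    intro i _
    rw [abs_neg]
    have hρmono : ρ i ≤ ρ (i+1) := max_le_max (hptmono i) (le_refl s)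
    have hpt0 : 0 ≤ pt i := le_min (by positivity) ht0
    have hptρ : pt i ≤ ρ i := le_max_left _ _
    have hρT : ρ i ≤ T := max_le (le_trans (min_le_right _ _) htT) (le_trans hst htT)
    have hρ1T : ρ (i+1) ≤ T := max_le (le_trans (min_le_right _ _) htT) (le_trans hst htT)
    have hδpt : pt (i+1) - pt i ≤ T / 2^n := by
      have hcast : ((i+1:ℕ):ℝ) * T / 2^n = ((i:ℝ)+1) * T / 2^n := by push_cast; ring
      have h := min_sub_min_le (c := t) (hgmono i)
      calc pt (i+1) - pt i = ((i+1:ℕ):ℝ)*T/2^n ⊓ t - (i:ℝ)*T/2^n ⊓ t := rfl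
        _ = ((i:ℝ)+1)*T/2^n ⊓ t - (i:ℝ)*T/2^n ⊓ t := by rw [hcast]
        _ ≤ ((i:ℝ)+1)*T/2^n - (i:ℝ)*T/2^n := h
        _ = T/2^n := hgdiff i
    rcases le_or_gt (ρ (i+1)) (ρ i) with hcase | hcase
    · have : ρ (i+1) = ρ i := le_antisymm hcase hρmono
      rw [this]
      simp only [sub_self, mul_zero, abs_zero]
      positivity
    · -- ρ (i+1) = pt (i+1) and the increments are at most one mesh size
      have hsv : s < pt (i+1) := by
        by_contra hcon
        push_neg at hcon
        have h1 : ρ (i+1) = s := max_eq_right hcon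
        have h2 : s ≤ ρ i := le_max_right _ _
        rw [h1] at hcase
        linarith
      have hρ1 : ρ (i+1) = pt (i+1) := max_eq_left hsv.le
      have hδ1 : ρ i - pt i ≤ T / 2^n := by
        rcases le_total s (pt i) with h | h
        · rw [show ρ i = pt i from max_eq_left h]
          simp only [sub_self]
          positivity
        · rw [show ρ i = s from max_eq_right h]
          have : s ≤ pt (i+1) := hsv.le
          linarith [hδpt]
      have hδ2 : ρ (i+1) - ρ i ≤ T / 2^n := by
        rw [hρ1]
        have : pt i ≤ ρ i := hptρ
        linarith [hδpt]
      exact youngTermBound hCf hCg hα hβ hf hg hpt0 hptρ hρT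
        (le_trans hpt0 hptρ) hρmono hρ1T hδ1 hδ2
  refine le_trans (Finset.sum_le_sum hbound) ?_
  rw [Finset.sum_const, Finset.card_range, nsmul_eq_mul]
  push_cast
  calc (2:ℝ)^n * (Cf * Cg * ((T/2^n) ^ α * (T/2^n) ^ β))
      = Cf * Cg * ((2:ℝ)^n * ((T/2^n) ^ α * (T/2^n) ^ β)) := by ring
    _ ≤ Cf * Cg * (T^(α+β) * ((2:ℝ)^((1:ℝ)-(α+β)))^n) := by
        apply mul_le_mul_of_nonneg_left (youngGeom hT hαβ n) (by positivity)
    _ = (Cf * Cg * T^(α+β)) * ((2:ℝ)^((1:ℝ)-(α+β)))^n := by ring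


/-- The Riemann sum over the capped dyadic partition of `[s,t]` is close to `f s (g t - g s)`. -/
lemma youngRhoMax (hT : 0 < T) (hCf : 0 < Cf) (hCg : 0 < Cg)
    (hα : 0 < α) (hβ : 0 < β) (hαβ : 1 < α + β)
    (hf : ∀ s t : ℝ, 0 ≤ s → s ≤ t → t ≤ T → |f t - f s| ≤ Cf * (t - s) ^ α)
    (hg : ∀ s t : ℝ, 0 ≤ s → s ≤ t → t ≤ T → |g t - g s| ≤ Cg * (t - s) ^ β)
    (n : ℕ) (s t : ℝ) (hs0 : 0 ≤ s) (hst : s ≤ t) (htT : t ≤ T) :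
    |youngRS f g (fun i => max (min ((i:ℝ) * T / 2^n) t) s) (2^n) - f s * (g t - g s)|
      ≤ (Cf * Cg * ∑' k : ℕ, (2 / ((k:ℝ)+1)) ^ (α+β)) * (t-s) ^ (α+β) := by
  have ht0 : 0 ≤ t := hs0.trans hst
  set ρ : ℕ → ℝ := fun i => max (min ((i:ℝ) * T / 2^n) t) s with hρdef
  have h2n : (0:ℝ) < 2^n := by positivity
  obtain ⟨m, hm⟩ : ∃ m, 2^n = m+1 := ⟨2^n - 1, by have := Nat.one_le_two_pow (n := n); omega⟩
  have hρ0 : ρ 0 = s := by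
    show max (min (((0:ℕ):ℝ) * T / 2^n) t) s = s
    norm_num
    exact Or.inl hs0
  have hρlast : ρ (2^n) = t := by
    show max (min (((2^n:ℕ):ℝ) * T / 2^n) t) s = t
    have e : ((2^n:ℕ):ℝ) * T / 2^n = T := by push_cast; field_simp
    rw [e, min_eq_right htT, max_eq_left hst]
  rw [hm] at hρlast
  have hmono : ∀ i < m + 1, ρ i ≤ ρ (i+1) := by
    intro i _
    refine max_le_max (min_le_min ?_ (le_refl t)) (le_refl s)
    apply div_le_div_of_nonneg_right ?_ h2n.le
    push_cast
    nlinarith [Nat.cast_nonneg (α := ℝ) i]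
  have h := youngMax hCf hCg hα hβ hαβ hf hg m ρ hmono
    (by rw [hρ0]; exact hs0) (by rw [hρlast]; exact htT)
  rw [hρ0, hρlast] at h
  rw [hm]
  refine h.trans ?_
  have hts : (0:ℝ) ≤ (t - s) ^ (α+β) := Real.rpow_nonneg (by linarith) _
  refine mul_le_mul_of_nonneg_right ?_ hts
  exact mul_le_mul_of_nonneg_left (youngZ_bound hαβ m) (by positivity)

end YoungMain

/-- **Young integral via the sewing lemma.**
Let `T > 0`, `0 < α, β ≤ 1` with `α + β > 1`, and let `f, g : [0,T] → ℝ` be respectively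
`α`- and `β`-Hölder continuous. Then there is a function `φ : [0,T] → ℝ` (the Young integral
`∫₀^• f dg`) and a constant `c > 0` such that
`|φ_t − φ_s − f_s (g_t − g_s)| ≤ c |t−s|^{α+β}` for all `0 ≤ s ≤ t ≤ T`; moreover any two
such functions differ by an additive constant. -/
theorem young_integral_exists (T α β : ℝ) (hT : 0 < T)
    (hα : 0 < α) (hα1 : α ≤ 1) (hβ : 0 < β) (hβ1 : β ≤ 1) (hαβ : 1 < α + β)
    (f g : ℝ → ℝ) (Cf Cg : ℝ) (hCf : 0 < Cf) (hCg : 0 < Cg)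
    (hf : ∀ s t : ℝ, 0 ≤ s → s ≤ t → t ≤ T → |f t - f s| ≤ Cf * (t - s) ^ α)
    (hg : ∀ s t : ℝ, 0 ≤ s → s ≤ t → t ≤ T → |g t - g s| ≤ Cg * (t - s) ^ β) :
    ∃ φ : ℝ → ℝ, ∃ c : ℝ, 0 < c ∧
      (∀ s t : ℝ, 0 ≤ s → s ≤ t → t ≤ T →
        |φ t - φ s - f s * (g t - g s)| ≤ c * (t - s) ^ (α + β)) ∧
      ∀ (ψ : ℝ → ℝ) (c' : ℝ), 0 < c' →
        (∀ s t : ℝ, 0 ≤ s → s ≤ t → t ≤ T →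
          |ψ t - ψ s - f s * (g t - g s)| ≤ c' * (t - s) ^ (α + β)) →
        ∃ C₀ : ℝ, ∀ t ∈ Set.Icc (0:ℝ) T, ψ t = φ t + C₀ := by
  have hr1 : (2:ℝ)^((1:ℝ)-(α+β)) < 1 :=
    Real.rpow_lt_one_of_one_lt_of_neg one_lt_two (by linarith)
  have hr0 : (0:ℝ) ≤ (2:ℝ)^((1:ℝ)-(α+β)) := (Real.rpow_pos_of_pos two_pos _).le
  have hcauchy : ∀ t : ℝ, 0 ≤ t → t ≤ T → CauchySeq (fun n => youngPhiN f g T n t) := by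
    intro t ht0 htT
    apply cauchySeq_of_le_geometric ((2:ℝ)^((1:ℝ)-(α+β))) (Cf * Cg * T^(α+β)) hr1
    intro n
    rw [Real.dist_eq, abs_sub_comm]
    exact youngRefine hT hCf hCg hα hβ hαβ hf hg n t ht0 htT
  have hexists : ∀ t : ℝ, ∃ L : ℝ, 0 ≤ t → t ≤ T →
      Filter.Tendsto (fun n => youngPhiN f g T n t) Filter.atTop (nhds L) := by
    intro t
    by_cases h : 0 ≤ t ∧ t ≤ T
    · obtain ⟨L, hL⟩ := cauchySeq_tendsto_of_complete (hcauchy t h.1 h.2)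
      exact ⟨L, fun _ _ => hL⟩
    · exact ⟨0, fun h1 h2 => absurd ⟨h1, h2⟩ h⟩
  choose φ hφ using hexists
  have hZ0 : (0:ℝ) ≤ ∑' k : ℕ, (2 / ((k:ℝ)+1)) ^ (α+β) :=
    tsum_nonneg (fun k => Real.rpow_nonneg (by positivity) _)
  set Z : ℝ := ∑' k : ℕ, (2 / ((k:ℝ)+1)) ^ (α+β) with hZdef
  set c : ℝ := Cf * Cg * Z + 1 with hcdef
  have hc : 0 < c := by
    rw [hcdef]
    nlinarith [mul_nonneg (mul_pos hCf hCg).le hZ0]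
  have hmain : ∀ s t : ℝ, 0 ≤ s → s ≤ t → t ≤ T →
      |φ t - φ s - f s * (g t - g s)| ≤ c * (t - s) ^ (α + β) := by
    intro s t hs0 hst htT
    have ht0 : 0 ≤ t := hs0.trans hst
    have hsT : s ≤ T := hst.trans htT
    have hts0 : (0:ℝ) ≤ (t-s) ^ (α+β) := Real.rpow_nonneg (by linarith) _
    have hbd : ∀ n : ℕ, |youngPhiN f g T n t - youngPhiN f g T n s - f s * (g t - g s)|
        ≤ (Cf*Cg*Z) * (t-s)^(α+β) + (Cf * Cg * T^(α+β)) * ((2:ℝ)^((1:ℝ)-(α+β)))^n := by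
      intro n
      have h1 := youngDiff hT hCf hCg hα hβ hαβ hf hg n s t hs0 hst htT
      have h2 := youngRhoMax hT hCf hCg hα hβ hαβ hf hg n s t hs0 hst htT
      have hsplit : youngPhiN f g T n t - youngPhiN f g T n s - f s * (g t - g s)
          = (youngPhiN f g T n t - youngPhiN f g T n s
              - youngRS f g (fun i => max (min ((i:ℝ) * T / 2^n) t) s) (2^n))
            + (youngRS f g (fun i => max (min ((i:ℝ) * T / 2^n) t) s) (2^n)
              - f s * (g t - g s)) := by ring
    
      rw [hsplit]
      refine le_trans (abs_add_le _ _) ?_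
      rw [hZdef]
      linarith [h1, h2]
    have hlim1 : Filter.Tendsto
        (fun n => |youngPhiN f g T n t - youngPhiN f g T n s - f s * (g t - g s)|)
        Filter.atTop (nhds (|φ t - φ s - f s * (g t - g s)|)) :=
      (((hφ t ht0 htT).sub (hφ s hs0 hsT)).sub tendsto_const_nhds).abs
    have hlim2 : Filter.Tendsto
        (fun n : ℕ => (Cf*Cg*Z) * (t-s)^(α+β)
            + (Cf * Cg * T^(α+β)) * ((2:ℝ)^((1:ℝ)-(α+β)))^n)
        Filter.atTop (nhds ((Cf*Cg*Z) * (t-s)^(α+β) + (Cf * Cg * T^(α+β)) * 0)) :=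
      tendsto_const_nhds.add
        ((tendsto_pow_atTop_nhds_zero_of_lt_one hr0 hr1).const_mul _)
    have hfin := le_of_tendsto_of_tendsto' hlim1 hlim2 hbd
    rw [mul_zero, add_zero] at hfin
    refine hfin.trans ?_
    rw [hcdef]
    nlinarith
  refine ⟨φ, c, hc, hmain, ?_⟩
  intro ψ c' hc' hψ
  refine ⟨ψ 0 - φ 0, ?_⟩
  rintro t ⟨ht0, htT⟩
  have key : ∀ n : ℕ, 1 ≤ n → |(ψ t - φ t) - (ψ 0 - φ 0)|
      ≤ ((c + c') * T^(α+β)) * ((n:ℝ))^((1:ℝ)-(α+β)) := by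
    intro n hn
    have hn0 : (0:ℝ) < (n:ℝ) := by
      have : 0 < n := hn
      exact_mod_cast this
    set F : ℕ → ℝ := fun k => ψ ((k:ℝ)*t/n) - φ ((k:ℝ)*t/n) with hF
    have hFn : F n = ψ t - φ t := by
      simp only [hF]
      rw [show (n:ℝ)*t/n = t from by field_simp]
    have hF0 : F 0 = ψ 0 - φ 0 := by
      simp only [hF]
      norm_num
    have hterm : ∀ k ∈ Finset.range n, |F (k+1) - F k| ≤ (c + c') * (t/n)^(α+β) := by
      intro k hk
      have hkn : ((k:ℕ):ℝ) + 1 ≤ (n:ℝ) := by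
        have := Finset.mem_range.mp hk
        exact_mod_cast this
      have ha0 : 0 ≤ (k:ℝ)*t/n := by positivity
      have hab : (k:ℝ)*t/n ≤ ((k+1:ℕ):ℝ)*t/n := by
        apply div_le_div_of_nonneg_right ?_ hn0.le
        push_cast
        nlinarith [Nat.cast_nonneg (α := ℝ) k]
      have hbT : ((k+1:ℕ):ℝ)*t/n ≤ T := by
        have h1 : ((k+1:ℕ):ℝ)*t/n ≤ (n:ℝ)*t/n := by
          apply div_le_div_of_nonneg_right ?_ hn0.le
          push_cast
          nlinarith
        rw [show (n:ℝ)*t/n = t from by field_simp] at h1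
        linarith
      have hd : ((k+1:ℕ):ℝ)*t/n - (k:ℝ)*t/n = t/n := by
        push_cast
        field_simp
        ring
      have h1 := hψ _ _ ha0 hab hbT
      have h2 := hmain _ _ ha0 hab hbT
      rw [hd] at h1 h2
      have hsplit : F (k+1) - F k
          = (ψ (((k+1:ℕ):ℝ)*t/n) - ψ ((k:ℝ)*t/n)
              - f ((k:ℝ)*t/n) * (g (((k+1:ℕ):ℝ)*t/n) - g ((k:ℝ)*t/n)))
            - (φ (((k+1:ℕ):ℝ)*t/n) - φ ((k:ℝ)*t/n)
              - f ((k:ℝ)*t/n) * (g (((k+1:ℕ):ℝ)*t/n) - g ((k:ℝ)*t/n))) := by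
        simp only [hF]
        push_cast
        ring
      rw [hsplit]
      refine le_trans (abs_sub _ _) ?_
      linarith
    have hsum : |(ψ t - φ t) - (ψ 0 - φ 0)| ≤ (n:ℝ) * ((c + c') * (t/n)^(α+β)) := by
      have tele := Finset.sum_range_sub F n
      rw [← hFn, ← hF0, ← tele]
      refine le_trans (Finset.abs_sum_le_sum_abs _ _) ?_
      refine le_trans (Finset.sum_le_card_nsmul _ _ _ hterm) ?_
      rw [Finset.card_range, nsmul_eq_mul]
    have e3 : (n:ℝ) * (t/n)^(α+β) = t^(α+β) * (n:ℝ)^((1:ℝ)-(α+β)) :=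
      youngPowHelper hn0 ht0
    have e4 : t^(α+β) ≤ T^(α+β) := Real.rpow_le_rpow ht0 htT (by linarith)
    have e5 : (0:ℝ) ≤ ((n:ℝ))^((1:ℝ)-(α+β)) := Real.rpow_nonneg hn0.le _
    calc |(ψ t - φ t) - (ψ 0 - φ 0)| ≤ (n:ℝ) * ((c + c') * (t/n)^(α+β)) := hsum
      _ = (c+c') * ((n:ℝ) * (t/n)^(α+β)) := by ring
      _ = (c+c') * (t^(α+β) * (n:ℝ)^((1:ℝ)-(α+β))) := by rw [e3]
      _ ≤ ((c+c') * T^(α+β)) * (n:ℝ)^((1:ℝ)-(α+β)) := by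
          have h6 : (c+c') * t^(α+β) ≤ (c+c') * T^(α+β) :=
            mul_le_mul_of_nonneg_left e4 (by linarith)
          calc (c+c') * (t^(α+β) * (n:ℝ)^((1:ℝ)-(α+β)))
              = ((c+c') * t^(α+β)) * (n:ℝ)^((1:ℝ)-(α+β)) := by ring
            _ ≤ ((c+c') * T^(α+β)) * (n:ℝ)^((1:ℝ)-(α+β)) :=
                mul_le_mul_of_nonneg_right h6 e5
  have hlim : Filter.Tendsto
      (fun n : ℕ => ((c + c') * T^(α+β)) * ((n:ℝ))^((1:ℝ)-(α+β)))
      Filter.atTop (nhds 0) := by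
    have h0 : Filter.Tendsto (fun n : ℕ => ((n:ℝ))^((1:ℝ)-(α+β)))
        Filter.atTop (nhds 0) := by
      have h1 := (tendsto_rpow_neg_atTop (y := (α+β)-1) (by linarith)).comp
        (tendsto_natCast_atTop_atTop (R := ℝ))
      convert h1 using 2 with n
      · simp only [Function.comp]
        norm_num
    simpa using h0.const_mul ((c + c') * T^(α+β))
  have habs := ge_of_tendsto hlim (Filter.eventually_atTop.mpr ⟨1, key⟩)
  have h0 : |(ψ t - φ t) - (ψ 0 - φ 0)| = 0 := le_antisymm habs (abs_nonneg _)
  have := abs_eq_zero.mp h0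
  linarith
end
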